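/- arXiv:2104.13006 — 5 statements merged into one kernel-verified Lean document; each statement's English description precedes it below -/
import Mathlib

section
/- For every α ∈ [0,∞], there exists an irrational number x ∈ (0,1) whose Engel digit sequence (d_n(x)) has exponent of convergence λ(x) = inf{s ≥ 0 : Σ_{n≥1} d_n(x)^{-s} < ∞} equal to α. -/
open Filter MeasureTheory Set
open scoped ENNReal NNReal

/-- The Engel series map `T(x) = x⌈1/x⌉ - 1`, with `T(0) = 0`. -/
noncomputable def engelT (x : ℝ) : ℝ := if x = 0 then 0 else x * (⌈x⁻¹⌉ : ℝ) - 1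

/-- The `n`-th Engel digit `d_n(x) = ⌈1/(T^{n-1} x)⌉` (for `n ≥ 1`);
it equals `0` when the Engel expansion of `x` has terminated. -/
noncomputable def engelDigit (n : ℕ) (x : ℝ) : ℕ := ⌈(engelT^[n - 1] x)⁻¹⌉₊

/-- The exponent of convergence `λ(x) = inf {s ≥ 0 : Σ_{n≥1} d_n(x)^{-s} < ∞}`,
 valued in `[0,∞]` (with `inf ∅ = ∞`). -/
noncomputable def engelLambda (x : ℝ) : ℝ≥0∞ :=
  sInf (ENNReal.ofReal ''
    {s : ℝ | 0 ≤ s ∧ Summable fun n : ℕ => ((engelDigit (n + 1) x : ℝ)) ^ (-s)})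

/-- `D(x) = liminf_n (log d_n(x))/(log n)`, valued in `[0,∞]`. -/
noncomputable def engelDexp (x : ℝ) : ℝ≥0∞ :=
  Filter.liminf (fun n : ℕ =>
    ENNReal.ofReal (Real.log (engelDigit n x) / Real.log n)) Filter.atTop

def Good (a : ℕ → ℕ) : Prop := (∀ n, 2 ≤ a n) ∧ Monotone a ∧ ∀ N, ∃ n, N < a n

noncomputable def engP (a : ℕ → ℕ) (n : ℕ) : ℝ := ∏ k ∈ Finset.range (n+1), ((a k : ℝ))⁻¹

noncomputable def eng (a : ℕ → ℕ) : ℝ := ∑' n, engP a n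

lemma Good.shift {a : ℕ → ℕ} (h : Good a) (m : ℕ) : Good (fun n => a (n + m)) := by
  obtain ⟨h2, hm, hu⟩ := h
  refine ⟨fun n => h2 _, fun i j hij => hm (by omega), fun N => ?_⟩
  obtain ⟨n, hn⟩ := hu N
  exact ⟨n, lt_of_lt_of_le hn (hm (by omega))⟩

section basic
variable {a : ℕ → ℕ} (ha : Good a)
include ha

lemma apos (k : ℕ) : (0:ℝ) < a k := by
  have := ha.1 k; positivity

lemma engP_pos (n : ℕ) : 0 < engP a n := by
  apply Finset.prod_pos; intro k _; exact inv_pos.2 (apos ha k)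

lemma engP_le (n : ℕ) : engP a n ≤ ((a 0 : ℝ))⁻¹ ^ (n+1) := by
  calc engP a n ≤ ∏ _k ∈ Finset.range (n+1), ((a 0 : ℝ))⁻¹ := by
        apply Finset.prod_le_prod
        · intro k _; exact (inv_pos.2 (apos ha k)).le
        · intro k _
          exact inv_anti₀ (apos ha 0) (by exact_mod_cast ha.2.1 (Nat.zero_le k))
    _ = ((a 0 : ℝ))⁻¹ ^ (n+1) := by simp

lemma engP_le_half (n : ℕ) : engP a n ≤ (2:ℝ)⁻¹ ^ (n+1) := by
  refine (engP_le ha n).trans ?_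
  apply pow_le_pow_left₀ (by positivity)
  rw [inv_le_inv₀ (apos ha 0) (by norm_num)]
  exact_mod_cast ha.1 0

lemma eng_summable : Summable (engP a) := by
  apply Summable.of_nonneg_of_le (fun n => (engP_pos ha n).le) (engP_le_half ha)
  exact ((summable_geometric_of_lt_one (by norm_num) (by norm_num : (2:ℝ)⁻¹ < 1)).mul_right
    _).congr (fun n => (pow_succ _ n).symm)

lemma eng_pos : 0 < eng a :=
  lt_of_lt_of_le (engP_pos ha 0) (Summable.le_tsum (eng_summable ha) 0 (fun n _ => (engP_pos ha n).le))

lemma eng_lt : eng a < ((a 0 : ℝ) - 1)⁻¹ := by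
  obtain ⟨N, hN⟩ := ha.2.2 (a 0)
  have hgeom : Summable (fun n : ℕ => ((a 0 : ℝ))⁻¹ ^ (n+1)) := by
    have h1 : ((a 0:ℝ))⁻¹ < 1 := by
      rw [inv_lt_one_iff₀]; right; exact_mod_cast lt_of_lt_of_le one_lt_two (ha.1 0)
    exact ((summable_geometric_of_lt_one (by positivity) h1).mul_right _).congr
      (fun n => (pow_succ _ n).symm)
  have hlt : eng a < ∑' n, ((a 0 : ℝ))⁻¹ ^ (n+1) := by
    refine Summable.tsum_lt_tsum (i := N) (engP_le ha) ?_ (eng_summable ha) hgeom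
    calc engP a N < ∏ _k ∈ Finset.range (N+1), ((a 0 : ℝ))⁻¹ := by
          apply Finset.prod_lt_prod
          · intro k _; exact inv_pos.2 (apos ha k)
          · intro k _
            exact inv_anti₀ (apos ha 0) (by exact_mod_cast ha.2.1 (Nat.zero_le k))
          · refine ⟨N, Finset.self_mem_range_succ N, ?_⟩
            exact inv_strictAnti₀ (apos ha 0) (by exact_mod_cast hN)
      _ = ((a 0 : ℝ))⁻¹ ^ (N+1) := by simp
  have h2 : (1:ℝ) < a 0 := by exact_mod_cast lt_of_lt_of_le one_lt_two (ha.1 0)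
  have hg := tsum_geometric_of_lt_one (r := ((a 0:ℝ))⁻¹) (by positivity)
    (by rw [inv_lt_one_iff₀]; right; exact h2)
  have hsum : ∑' n : ℕ, ((a 0 : ℝ))⁻¹ ^ (n+1) = ((a 0 : ℝ) - 1)⁻¹ := by
    calc ∑' n : ℕ, ((a 0 : ℝ))⁻¹ ^ (n+1) = ((a 0:ℝ))⁻¹ * ∑' n : ℕ, ((a 0 : ℝ))⁻¹ ^ n := by
          rw [← tsum_mul_left]; exact tsum_congr fun n => by rw [pow_succ, mul_comm]
      _ = ((a 0:ℝ))⁻¹ * (1 - ((a 0:ℝ))⁻¹)⁻¹ := by rw [hg]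
      _ = ((a 0 : ℝ) - 1)⁻¹ := by
          rw [← mul_inv]
          congr 1
          field_simp
  exact hlt.trans_le (le_of_eq hsum)

end basic

section rec
variable {a : ℕ → ℕ} (ha : Good a)
include ha

lemma eng_rec : eng a = ((a 0 : ℝ))⁻¹ * (1 + eng (fun n => a (n + 1))) := by
  have hs : Good (fun n => a (n + 1)) := ha.shift 1
  have hP : ∀ n, engP a n = ((a 0 : ℝ))⁻¹ * ∏ k ∈ Finset.range n, ((a (k+1) : ℝ))⁻¹ := by
    intro n
    rw [engP, Finset.prod_range_succ', mul_comm]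
  have hg : Summable (fun n : ℕ => ∏ k ∈ Finset.range n, ((a (k+1) : ℝ))⁻¹) := by
    apply Summable.of_nonneg_of_le (g := fun n : ℕ => ∏ k ∈ Finset.range n, ((a (k+1) : ℝ))⁻¹)
      (f := fun n : ℕ => (2:ℝ)⁻¹ ^ n)
    · intro n; apply Finset.prod_nonneg; intro k _; positivity
    · intro n
      calc ∏ k ∈ Finset.range n, ((a (k+1) : ℝ))⁻¹ ≤ ∏ _k ∈ Finset.range n, (2:ℝ)⁻¹ := by
            apply Finset.prod_le_prod
            · intro k _; positivity
            · intro k _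
              rw [inv_le_inv₀ (apos ha (k+1)) (by norm_num)]
              exact_mod_cast ha.1 (k+1)
        _ = (2:ℝ)⁻¹ ^ n := by simp
    · exact summable_geometric_of_lt_one (by norm_num) (by norm_num)
  calc eng a = ∑' n, ((a 0 : ℝ))⁻¹ * ∏ k ∈ Finset.range n, ((a (k+1) : ℝ))⁻¹ :=
        tsum_congr hP
    _ = ((a 0 : ℝ))⁻¹ * ∑' n : ℕ, ∏ k ∈ Finset.range n, ((a (k+1) : ℝ))⁻¹ := tsum_mul_left
    _ = ((a 0 : ℝ))⁻¹ * (1 + eng (fun n => a (n + 1))) := by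
        congr 1
        rw [Summable.tsum_eq_zero_add hg]
        simp [eng, engP]

lemma eng_inv_bounds : (a 0 : ℝ) - 1 < (eng a)⁻¹ ∧ (eng a)⁻¹ < a 0 := by
  have hs : Good (fun n => a (n + 1)) := ha.shift 1
  have hy0 : 0 < eng (fun n => a (n + 1)) := eng_pos hs
  have hy1 : eng (fun n => a (n + 1)) < ((a 0 : ℝ) - 1)⁻¹ := by
    refine (eng_lt hs).trans_le ?_
    apply inv_anti₀
    · have := ha.1 0; simp only [sub_pos]; exact_mod_cast lt_of_lt_of_le one_lt_two this
    · have : a 0 ≤ a 1 := ha.2.1 (by norm_num)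
      have h1 : (a 0 : ℝ) ≤ a 1 := by exact_mod_cast this
      linarith
  have ha1 : (1:ℝ) < a 0 := by exact_mod_cast lt_of_lt_of_le one_lt_two (ha.1 0)
  have hx : eng a = ((a 0 : ℝ))⁻¹ * (1 + eng (fun n => a (n + 1))) := eng_rec ha
  have hxpos : 0 < eng a := eng_pos ha
  set A : ℝ := (a 0 : ℝ) with hA
  set y : ℝ := eng (fun n => a (n + 1)) with hyy
  have hA1 : (0:ℝ) < A - 1 := by linarith
  have hy1' : y * (A - 1) < 1 := by
    have h := mul_lt_mul_of_pos_right hy1 hA1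
    rwa [inv_mul_cancel₀ (ne_of_gt hA1)] at h
  constructor
  · rw [lt_inv_comm₀ hA1 hxpos, hx, inv_mul_eq_div, div_lt_iff₀ (by linarith), mul_comm,
      ← div_eq_mul_inv, lt_div_iff₀ hA1]
    nlinarith
  · rw [inv_lt_comm₀ hxpos (by linarith), hx]
    nlinarith [mul_pos (inv_pos.2 (show (0:ℝ) < A by linarith)) hy0]

end rec

section digits
variable {a : ℕ → ℕ} (ha : Good a)
include ha

lemma eng_ceil : ⌈(eng a)⁻¹⌉ = (a 0 : ℤ) := by
  obtain ⟨h1, h2⟩ := eng_inv_bounds ha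
  rw [Int.ceil_eq_iff]
  constructor
  · push_cast; linarith
  · push_cast; linarith

lemma eng_natCeil : ⌈(eng a)⁻¹⌉₊ = a 0 := by
  obtain ⟨h1, h2⟩ := eng_inv_bounds ha
  have h0 : a 0 ≠ 0 := by have := ha.1 0; omega
  rw [Nat.ceil_eq_iff h0]
  have hcast : ((a 0 - 1 : ℕ) : ℝ) = (a 0 : ℝ) - 1 := by
    have := ha.1 0
    push_cast [Nat.cast_sub (by omega : 1 ≤ a 0)]
    ring
  exact ⟨by rw [hcast]; linarith, by linarith⟩

lemma engelT_eng : engelT (eng a) = eng (fun n => a (n + 1)) := by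
  have hx := eng_pos ha
  rw [engelT, if_neg (ne_of_gt hx), eng_ceil ha]
  push_cast
  rw [eng_rec ha]
  have hA : (0:ℝ) < (a 0 : ℝ) := apos ha 0
  field_simp
  ring

lemma engelT_iter_eng (m : ℕ) : engelT^[m] (eng a) = eng (fun n => a (n + m)) := by
  induction m with
  | zero => simp
  | succ m ih =>
    rw [Function.iterate_succ_apply', ih, engelT_eng (ha.shift m)]
    congr 1
    ext n
    congr 1
    omega

lemma engelDigit_eng (n : ℕ) : engelDigit (n + 1) (eng a) = a n := by
  rw [engelDigit]
  simp only [Nat.add_sub_cancel]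
  rw [engelT_iter_eng ha n, eng_natCeil (ha.shift n)]
  simp

end digits

section irr
variable {a : ℕ → ℕ} (ha : Good a)
include ha

lemma engP_mul_cast (N m : ℕ) :
    ((∏ k ∈ Finset.range (N+1), a k : ℕ) : ℝ) * engP a (m + (N+1)) =
      engP (fun k => a (k + (N+1))) m := by
  have hidx : m + (N+1) + 1 = (N+1) + (m+1) := by omega
  rw [engP, hidx, Finset.prod_range_add (fun k => ((a k:ℝ))⁻¹) (N+1) (m+1)]
  push_cast
  rw [← mul_assoc]
  have h1 : (∏ k ∈ Finset.range (N+1), (a k : ℝ)) * (∏ k ∈ Finset.range (N+1), (a k : ℝ)⁻¹) = 1 := by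
    rw [← Finset.prod_mul_distrib]
    apply Finset.prod_eq_one
    intro k _
    exact mul_inv_cancel₀ (ne_of_gt (apos ha k))
  rw [h1, one_mul, engP]
  apply Finset.prod_congr rfl
  intro k _
  rw [show N + 1 + k = k + (N + 1) from by omega]

lemma engP_mul_cast_le (N n : ℕ) (hn : n ≤ N) :
    ((∏ k ∈ Finset.range (N+1), a k : ℕ) : ℝ) * engP a n =
      ((∏ k ∈ Finset.range (N - n), a (n + 1 + k) : ℕ) : ℝ) := by
  have hidx : N + 1 = (n+1) + (N - n) := by omega
  rw [engP, hidx, Finset.prod_range_add a (n+1) (N-n)]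
  push_cast
  rw [mul_comm (∏ k ∈ Finset.range (n+1), (a k : ℝ)) _, mul_assoc]
  have h1 : (∏ k ∈ Finset.range (n+1), (a k : ℝ)) * (∏ k ∈ Finset.range (n+1), (a k : ℝ)⁻¹) = 1 := by
    rw [← Finset.prod_mul_distrib]
    apply Finset.prod_eq_one
    intro k _
    exact mul_inv_cancel₀ (ne_of_gt (apos ha k))
  rw [h1, mul_one]

lemma eng_irrational : Irrational (eng a) := by
  intro hmem
  obtain ⟨q, hq⟩ := hmem
  obtain ⟨N, hN⟩ := ha.2.2 (q.den + 1)
  set A : ℕ := ∏ k ∈ Finset.range (N+1), a k with hAdef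
  set B : ℕ := ∑ n ∈ Finset.range (N+1), ∏ k ∈ Finset.range (N - n), a (n + 1 + k) with hBdef
  set y : ℝ := eng (fun k => a (k + (N+1))) with hydef
  have hshift : Good (fun k => a (k + (N+1))) := ha.shift (N+1)
  have hy0 : 0 < y := eng_pos hshift
  have hsplit : ∑ n ∈ Finset.range (N+1), engP a n + ∑' m : ℕ, engP a (m + (N+1)) = eng a :=
    Summable.sum_add_tsum_nat_add (N+1) (eng_summable ha)
  have htail : (A:ℝ) * ∑' m : ℕ, engP a (m + (N+1)) = y := by
    rw [← tsum_mul_left]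
    exact tsum_congr (engP_mul_cast ha N)
  have hpart : (A:ℝ) * ∑ n ∈ Finset.range (N+1), engP a n = (B:ℝ) := by
    rw [Finset.mul_sum, hBdef]
    push_cast
    apply Finset.sum_congr rfl
    intro n hn
    rw [engP_mul_cast_le ha N n (by simpa [Nat.lt_succ_iff] using hn)]
    push_cast
    ring
  -- A * x = B + y
  have hAx : (A:ℝ) * eng a = (B:ℝ) + y := by
    rw [← hsplit, mul_add, hpart, htail]
  -- q.den * (q:ℝ) = q.num
  have hqden : ((q.den:ℝ)) * (q:ℝ) = (q.num:ℝ) := by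
    rw [Rat.cast_def]
    have : (q.den:ℝ) ≠ 0 := by exact_mod_cast q.den_pos.ne'
    field_simp
  have key : ((q.den:ℝ)) * y = ((A * q.num - (q.den:ℤ) * B : ℤ) : ℝ) := by
    push_cast
    have : ((q.den:ℝ)) * ((A:ℝ) * eng a) = (A:ℝ) * (q.num:ℝ) := by
      rw [← hq]
      calc ((q.den:ℝ)) * ((A:ℝ) * (q:ℝ)) = (A:ℝ) * (((q.den:ℝ)) * (q:ℝ)) := by ring
        _ = (A:ℝ) * (q.num:ℝ) := by rw [hqden]
    rw [hAx] at this
    linarith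
  have hub : ((q.den:ℝ)) * y < 1 := by
    have hy1 : y < ((a (N+1) : ℝ) - 1)⁻¹ := by
      have := eng_lt hshift
      simpa using this
    have haN : (q.den + 1 : ℝ) < (a (N+1) : ℝ) := by
      have h1 : a N ≤ a (N+1) := ha.2.1 (by omega)
      exact_mod_cast lt_of_lt_of_le hN h1
    have hd1 : (0:ℝ) < (a (N+1) : ℝ) - 1 := by linarith
    have h2 : ((q.den:ℝ)) * ((a (N+1) : ℝ) - 1)⁻¹ < 1 := by
      rw [mul_inv_lt_iff₀ hd1, one_mul]
      linarith
    have hd0 : (0:ℝ) ≤ (q.den:ℝ) := by positivity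
    nlinarith
  have hlb : 0 < ((q.den:ℝ)) * y := by
    have : (0:ℝ) < q.den := by exact_mod_cast q.den_pos
    positivity
  rw [key] at hub hlb
  have h1 : (0:ℤ) < A * q.num - (q.den:ℤ) * B := by exact_mod_cast hlb
  have h2 : (A * q.num - (q.den:ℤ) * B : ℤ) < 1 := by exact_mod_cast hub
  omega

end irr

section helpers

lemma summable_of_eventually_le {f g : ℕ → ℝ} (hg : Summable g) (h0 : ∀ n, 0 ≤ f n)
    (hev : ∀ᶠ n in atTop, f n ≤ g n) : Summable f := by
  obtain ⟨N, hN⟩ := eventually_atTop.1 hev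
  rw [← summable_nat_add_iff N]
  exact Summable.of_nonneg_of_le (fun n => h0 _) (fun n => hN _ (Nat.le_add_left N n))
    ((summable_nat_add_iff N).2 hg)

lemma not_summable_shift_inv : ¬ Summable (fun n : ℕ => ((n:ℝ) + 2)⁻¹) := by
  intro h
  have h2 : Summable (fun n : ℕ => (fun m : ℕ => ((m:ℝ))⁻¹) (n + 2)) := by
    apply h.congr
    intro n
    push_cast
    ring_nf
  exact Real.not_summable_natCast_inv
    ((summable_nat_add_iff (f := fun m : ℕ => ((m:ℝ))⁻¹) 2).1 h2)

lemma not_summable_one : ¬ Summable (fun _ : ℕ => (1:ℝ)) := by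
  intro h
  have := h.tendsto_atTop_zero
  have h1 := tendsto_nhds_unique this tendsto_const_nhds
  norm_num at h1

lemma sInf_ofReal_Ioi (t : ℝ) (ht : 0 ≤ t) :
    sInf (ENNReal.ofReal '' Set.Ioi t) = ENNReal.ofReal t := by
  apply le_antisymm
  · refine ENNReal.le_of_forall_pos_le_add fun ε hε _ => ?_
    have hmem : ENNReal.ofReal (t + ε) ∈ ENNReal.ofReal '' Set.Ioi t :=
      ⟨t + ε, by simp [Set.mem_Ioi]; positivity, rfl⟩
    refine (sInf_le hmem).trans ?_
    rw [ENNReal.ofReal_add ht (by positivity), ENNReal.ofReal_coe_nnreal]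
  · apply le_sInf
    rintro b ⟨s, hs, rfl⟩
    exact ENNReal.ofReal_le_ofReal (le_of_lt hs)

lemma engelLambda_eng {a : ℕ → ℕ} (ha : Good a) :
    engelLambda (eng a) =
      sInf (ENNReal.ofReal '' {s : ℝ | 0 ≤ s ∧ Summable fun n : ℕ => ((a n : ℝ)) ^ (-s)}) := by
  rw [engelLambda]
  congr 1
  congr 1
  ext s
  simp only [Set.mem_setOf_eq, engelDigit_eng ha]

lemma eng_mem_Ioo {a : ℕ → ℕ} (ha : Good a) : eng a ∈ Set.Ioo (0:ℝ) 1 := by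
  refine ⟨eng_pos ha, lt_of_lt_of_le (eng_lt ha) ?_⟩
  rw [inv_le_one_iff₀]
  right
  have := ha.1 0
  have : (2:ℝ) ≤ (a 0 : ℝ) := by exact_mod_cast this
  linarith

end helpers

section zero

lemma good_a0 : Good (fun n => 2 ^ (2 ^ n)) := by
  refine ⟨fun n => ?_, fun i j hij => ?_, fun N => ⟨N, ?_⟩⟩
  · calc 2 = 2^1 := (pow_one 2).symm
      _ ≤ 2 ^ (2^n) := Nat.pow_le_pow_right (by norm_num) Nat.one_le_two_pow
  · exact Nat.pow_le_pow_right (by norm_num) (Nat.pow_le_pow_right (by norm_num) hij)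
  · calc N < 2 ^ N := (Nat.lt_two_pow_self (n := N))
      _ ≤ 2 ^ (2 ^ N) := Nat.pow_le_pow_right (by norm_num) ((Nat.lt_two_pow_self (n := N))).le

lemma rpow_two_pow_eq (s : ℝ) (m : ℕ) : (((2:ℝ)^m))^(-s) = ((2:ℝ)^(-s))^m := by
  rw [← Real.rpow_natCast (2:ℝ) m, ← Real.rpow_natCast ((2:ℝ)^(-s)) m,
    ← Real.rpow_mul (by norm_num), ← Real.rpow_mul (by norm_num), mul_comm]

lemma set_a0 :
    {s : ℝ | 0 ≤ s ∧ Summable fun n : ℕ => (((fun n => 2 ^ (2 ^ n)) n : ℕ) : ℝ) ^ (-s)}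
      = Set.Ioi (0:ℝ) := by
  ext s
  simp only [Set.mem_setOf_eq, Set.mem_Ioi]
  constructor
  · rintro ⟨hs0, hsum⟩
    rcases lt_or_eq_of_le hs0 with h | h
    · exact h
    · exfalso
      apply not_summable_one
      apply hsum.congr
      intro n
      rw [← h, neg_zero, Real.rpow_zero]
  · intro hs
    refine ⟨hs.le, ?_⟩
    set r : ℝ := (2:ℝ)^(-s) with hr
    have hr0 : 0 < r := Real.rpow_pos_of_pos (by norm_num) _
    have hr1 : r < 1 :=
      Real.rpow_lt_one_of_one_lt_of_neg (by norm_num) (by linarith)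
    have hkey : ∀ n : ℕ, (((2:ℕ) ^ (2 ^ n) : ℕ) : ℝ) ^ (-s) = r ^ (2 ^ n) := by
      intro n
      push_cast
      rw [rpow_two_pow_eq]
    apply summable_of_eventually_le (g := fun n => r ^ n)
      (summable_geometric_of_lt_one hr0.le hr1)
    · intro n; positivity
    · filter_upwards [Filter.eventually_ge_atTop 0] with n _
      rw [hkey n]
      exact pow_le_pow_of_le_one hr0.le hr1.le (Nat.lt_two_pow_self (n := n)).le

end zero

lemma summable_shift_rpow (p : ℝ) (hp : p < -1) :
    Summable (fun n : ℕ => ((n:ℝ)+2)^p) := by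
  have h := Real.summable_nat_rpow.2 hp
  have h2 := (summable_nat_add_iff (f := fun m : ℕ => ((m:ℝ))^p) 2).2 h
  apply h2.congr
  intro n
  push_cast
  ring_nf

section pos
variable {t : ℝ} (ht : 0 < t)

noncomputable def aseq (t : ℝ) (n : ℕ) : ℕ := ⌈((n:ℝ)+2)^(t⁻¹)⌉₊

include ht

lemma aseq_base_lt (n : ℕ) : (1:ℝ) < ((n:ℝ)+2)^(t⁻¹) := by
  rw [Real.one_lt_rpow_iff_of_pos (by positivity)]
  exact Or.inl ⟨by linarith [Nat.cast_nonneg (α := ℝ) n], by positivity⟩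

lemma good_aseq : Good (aseq t) := by
  refine ⟨fun n => ?_, fun i j hij => ?_, fun N => ?_⟩
  · have := aseq_base_lt ht n
    have h2 : 1 < aseq t n := by
      rw [aseq, Nat.lt_ceil]
      exact_mod_cast this
    omega
  · apply Nat.ceil_le_ceil
    apply Real.rpow_le_rpow (by positivity) _ (by positivity)
    have : (i:ℝ) ≤ j := by exact_mod_cast hij
    linarith
  · have htend : Tendsto (fun n : ℕ => ((n:ℝ)+2)^(t⁻¹)) atTop atTop := by
      apply (tendsto_rpow_atTop (by positivity)).comp
      apply tendsto_atTop_add_const_right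
      exact tendsto_natCast_atTop_atTop
    obtain ⟨n, hn⟩ := (htend.eventually_gt_atTop (N:ℝ)).exists
    exact ⟨n, Nat.lt_ceil.2 hn⟩

lemma aseq_lb (n : ℕ) : ((n:ℝ)+2)^(t⁻¹) ≤ (aseq t n : ℝ) := Nat.le_ceil _

lemma aseq_ub (n : ℕ) : (aseq t n : ℝ) ≤ 2 * ((n:ℝ)+2)^(t⁻¹) := by
  have h1 := aseq_base_lt ht n
  have := Nat.ceil_lt_add_one (le_of_lt (lt_trans one_pos h1))
  rw [aseq]
  push_cast
  linarith

lemma aseq_summable_iff (s : ℝ) (hs : 0 ≤ s) :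
    Summable (fun n : ℕ => ((aseq t n : ℝ)) ^ (-s)) ↔ t < s := by
  constructor
  · intro hsum
    by_contra hts
    push_neg at hts
    apply not_summable_shift_inv
    have hc : (0:ℝ) < (2:ℝ)^(-s) := Real.rpow_pos_of_pos (by norm_num) _
    have hcmp : Summable (fun n : ℕ => (2:ℝ)^(-s) * ((n:ℝ)+2)⁻¹) := by
      apply summable_of_eventually_le hsum
      · intro n; positivity
      · filter_upwards with n
        have hb1 : (1:ℝ) ≤ (n:ℝ)+2 := by linarith [Nat.cast_nonneg (α := ℝ) n]
        calc (2:ℝ)^(-s) * ((n:ℝ)+2)⁻¹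
            = (2:ℝ)^(-s) * ((n:ℝ)+2)^(-(1:ℝ)) := by
              rw [Real.rpow_neg_one]
          _ ≤ (2:ℝ)^(-s) * ((n:ℝ)+2)^(-(s/t)) := by
              apply mul_le_mul_of_nonneg_left _ hc.le
              apply Real.rpow_le_rpow_of_exponent_le hb1
              rw [neg_le_neg_iff, div_le_one ht]
              exact hts
          _ = ((2:ℝ) * (((n:ℝ)+2)^(t⁻¹)))^(-s) := by
              rw [Real.mul_rpow (by norm_num : (0:ℝ) ≤ 2)
                  (Real.rpow_nonneg (show (0:ℝ) ≤ (n:ℝ)+2 by positivity) (t⁻¹)),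
                ← Real.rpow_mul (show (0:ℝ) ≤ (n:ℝ)+2 by positivity)]
              congr 2
              field_simp
          _ ≤ ((aseq t n : ℝ))^(-s) := by
              have hA : (0:ℝ) < (aseq t n : ℝ) :=
                lt_of_lt_of_le (lt_trans one_pos (aseq_base_lt ht n)) (aseq_lb ht n)
              rw [Real.rpow_neg (by positivity), Real.rpow_neg hA.le]
              apply inv_anti₀
              · exact Real.rpow_pos_of_pos hA s
              · exact Real.rpow_le_rpow (by positivity) (aseq_ub ht n) hs
    have := hcmp.mul_left ((2:ℝ)^(-s))⁻¹
    apply this.congr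
    intro n
    field_simp
  · intro hts
    apply summable_of_eventually_le (g := fun n => ((n:ℝ)+2)^(-(s/t)))
    · apply summable_shift_rpow
      rw [neg_lt_neg_iff, lt_div_iff₀ ht, one_mul]
      exact hts
    · intro n; positivity
    · filter_upwards with n
      have hb0 : (0:ℝ) < (n:ℝ)+2 := by positivity
      calc ((aseq t n : ℝ))^(-s) ≤ ((((n:ℝ)+2)^(t⁻¹)))^(-s) := by
            rw [Real.rpow_neg (by positivity), Real.rpow_neg (by positivity)]
            apply inv_anti₀
            · apply Real.rpow_pos_of_pos
              exact lt_trans one_pos (aseq_base_lt ht n)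
            · exact Real.rpow_le_rpow (by positivity) (aseq_lb ht n) hs
        _ = ((n:ℝ)+2)^(-(s/t)) := by
            rw [← Real.rpow_mul hb0.le]
            congr 1
            field_simp

lemma set_aseq :
    {s : ℝ | 0 ≤ s ∧ Summable fun n : ℕ => ((aseq t n : ℝ)) ^ (-s)} = Set.Ioi t := by
  ext s
  simp only [Set.mem_setOf_eq, Set.mem_Ioi]
  constructor
  · rintro ⟨hs0, hsum⟩
    exact (aseq_summable_iff ht s hs0).1 hsum
  · intro hts
    have hs0 : 0 ≤ s := le_of_lt (lt_of_le_of_lt ht.le hts)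
    exact ⟨hs0, (aseq_summable_iff ht s hs0).2 hts⟩

end pos

section top

lemma good_atop : Good (fun n => Nat.log 2 (n+2) + 2) := by
  refine ⟨fun n => by show 2 ≤ Nat.log 2 (n+2) + 2; omega, fun i j hij => ?_, fun N => ⟨2^N, ?_⟩⟩
  · show Nat.log 2 (i+2) + 2 ≤ Nat.log 2 (j+2) + 2
    have := Nat.log_monotone (b := 2) (show i + 2 ≤ j + 2 by omega)
    omega
  · show N < Nat.log 2 (2^N+2) + 2
    have h1 : Nat.log 2 (2^N) ≤ Nat.log 2 (2^N + 2) := Nat.log_monotone (by omega)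
    rw [Nat.log_pow (by norm_num)] at h1
    omega

lemma atop_log_le : ∀ᶠ n : ℕ in atTop,
    ((Nat.log 2 (n+2) + 2 : ℕ) : ℝ) ≤ 3 * Real.log ((n:ℝ) + 2) := by
  have hlog : Tendsto (fun n : ℕ => Real.log ((n:ℝ)+2)) atTop atTop :=
    Real.tendsto_log_atTop.comp
      (tendsto_atTop_add_const_right _ _ tendsto_natCast_atTop_atTop)
  filter_upwards [hlog.eventually_ge_atTop 2] with n hn
  have hle : ((Nat.log 2 (n+2) : ℕ) : ℝ) ≤ Real.logb 2 ((n:ℝ)+2) := by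
    have := Real.natLog_le_logb (n+2) 2
    rwa [show (((n+2 : ℕ)):ℝ) = (n:ℝ)+2 by push_cast; ring] at this
  have hlb : Real.logb 2 ((n:ℝ)+2) ≤ 2 * Real.log ((n:ℝ)+2) := by
    rw [Real.logb, div_le_iff₀ (Real.log_pos (by norm_num))]
    nlinarith [Real.log_two_gt_d9, Real.log_nonneg (show (1:ℝ) ≤ (n:ℝ)+2 by linarith [Nat.cast_nonneg (α := ℝ) n])]
  push_cast
  linarith

lemma atop_not_summable (s : ℝ) (hs0 : 0 ≤ s)
    (hsum : Summable fun n : ℕ => (((Nat.log 2 (n+2) + 2 : ℕ)) : ℝ) ^ (-s)) : False := by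
  rcases eq_or_lt_of_le hs0 with h | hs
  · apply not_summable_one
    apply hsum.congr
    intro n
    rw [← h, neg_zero, Real.rpow_zero]
  · apply not_summable_shift_inv
    apply summable_of_eventually_le hsum
    · intro n; positivity
    · -- eventually ((n:ℝ)+2)⁻¹ ≤ (log-term)^(-s)
      have hev1 : ∀ᶠ x : ℝ in atTop, (3 * Real.log x) ^ s ≤ x := by
        have ho := isLittleO_log_rpow_atTop (show (0:ℝ) < s⁻¹ by positivity)
        have hb := ho.bound (show (0:ℝ) < 1/6 by norm_num)
        filter_upwards [hb, Filter.eventually_ge_atTop (1:ℝ)] with x hx hx1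
        have hlx : 0 ≤ Real.log x := Real.log_nonneg hx1
        have hxr : 0 ≤ x ^ (s⁻¹) := Real.rpow_nonneg (by linarith) _
        rw [Real.norm_eq_abs, Real.norm_eq_abs, abs_of_nonneg hlx, abs_of_nonneg hxr] at hx
        have h3 : 3 * Real.log x ≤ x ^ (s⁻¹) := by linarith
        calc (3 * Real.log x) ^ s ≤ (x ^ (s⁻¹)) ^ s :=
              Real.rpow_le_rpow (by linarith) h3 hs0
          _ = x := by
              rw [← Real.rpow_mul (by linarith), inv_mul_cancel₀ (ne_of_gt hs),
                Real.rpow_one]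
      have hcomp : Tendsto (fun n : ℕ => (n:ℝ)+2) atTop atTop :=
        tendsto_atTop_add_const_right _ _ tendsto_natCast_atTop_atTop
      filter_upwards [hcomp.eventually hev1, atop_log_le,
        Filter.eventually_ge_atTop 1] with n h1 h2 _
      have hb0 : (0:ℝ) < ((Nat.log 2 (n+2) + 2 : ℕ) : ℝ) := by positivity
      have key : (((Nat.log 2 (n+2) + 2 : ℕ)) : ℝ) ^ s ≤ (n:ℝ)+2 := by
        calc (((Nat.log 2 (n+2) + 2 : ℕ)) : ℝ) ^ s ≤ (3 * Real.log ((n:ℝ)+2)) ^ s :=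
              Real.rpow_le_rpow hb0.le h2 hs0
          _ ≤ (n:ℝ)+2 := h1
      rw [Real.rpow_neg hb0.le]
      apply inv_anti₀
      · exact Real.rpow_pos_of_pos hb0 s
      · exact key

lemma set_atop :
    {s : ℝ | 0 ≤ s ∧ Summable fun n : ℕ =>
      (((fun n => Nat.log 2 (n+2) + 2) n : ℕ) : ℝ) ^ (-s)} = (∅ : Set ℝ) := by
  ext s
  simp only [Set.mem_setOf_eq, Set.mem_empty_iff_false, iff_false, not_and]
  intro hs0 hsum
  exact atop_not_summable s hs0 hsum

end top


/-- For every `α ∈ [0,∞]` there is an irrational `x ∈ (0,1)` with `λ(x) = α`. -/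
theorem exists_irrational_engelLambda_eq (α : ℝ≥0∞) :
    ∃ x ∈ Set.Ioo (0 : ℝ) 1, Irrational x ∧ engelLambda x = α := by
  rcases eq_or_ne α ⊤ with rfl | htop
  · refine ⟨eng (fun n => Nat.log 2 (n+2) + 2), eng_mem_Ioo good_atop,
      eng_irrational good_atop, ?_⟩
    rw [engelLambda_eng good_atop, set_atop]
    simp
  rcases eq_or_ne α 0 with rfl | hzero
  · refine ⟨eng (fun n => 2^(2^n)), eng_mem_Ioo good_a0, eng_irrational good_a0, ?_⟩
    rw [engelLambda_eng good_a0, set_a0, sInf_ofReal_Ioi 0 le_rfl, ENNReal.ofReal_zero]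
  · have ht : 0 < α.toReal := ENNReal.toReal_pos hzero htop
    refine ⟨eng (aseq α.toReal), eng_mem_Ioo (good_aseq ht),
      eng_irrational (good_aseq ht), ?_⟩
    rw [engelLambda_eng (good_aseq ht), set_aseq ht, sInf_ofReal_Ioi _ ht.le,
      ENNReal.ofReal_toReal htop]
end

section
/- If α = β with α, β > 0, let x = ⟨σ_1, σ_2, …⟩ be the number with Engel digits σ_n = ⌈(n+1)^{1/α}⌉; then x is irrational and λ(x) = α, where λ(x) is the exponent of convergence of the Engel digits of x. -/
open Filter MeasureTheory Set
open scoped ENNReal NNReal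

namespace EngelAux

/-- The tail value of the Engel series starting at digit index `k`. -/
noncomputable def t (σ : ℕ → ℕ) (k : ℕ) : ℝ :=
  ∑' n : ℕ, (∏ i ∈ Finset.range (n + 1), (σ (k + i) : ℝ))⁻¹

/-- Admissibility conditions on the digit sequence. -/
structure Good (σ : ℕ → ℕ) : Prop where
  two_le : ∀ k, 1 ≤ k → 2 ≤ σ k
  mono : ∀ a b, 1 ≤ a → a ≤ b → σ a ≤ σ b
  unbdd : ∀ m, ∃ n, 1 ≤ n ∧ m < σ n

variable {σ : ℕ → ℕ} {k : ℕ}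

lemma prod_pos (hg : Good σ) (hk : 1 ≤ k) (n : ℕ) :
    0 < ∏ i ∈ Finset.range n, (σ (k + i) : ℝ) := by
  apply Finset.prod_pos
  intro i _
  have h2 : 2 ≤ σ (k + i) := hg.two_le _ (by omega)
  have : (2 : ℝ) ≤ (σ (k + i) : ℝ) := by exact_mod_cast h2
  linarith

lemma prod_lower (hg : Good σ) (hk : 1 ≤ k) (n : ℕ) :
    ((σ k : ℝ)) ^ n ≤ ∏ i ∈ Finset.range n, (σ (k + i) : ℝ) := by
  calc ((σ k : ℝ)) ^ n = ∏ _i ∈ Finset.range n, (σ k : ℝ) := by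
        simp
    _ ≤ _ := by
        apply Finset.prod_le_prod
        · intro i _; positivity
        · intro i _
          exact_mod_cast hg.mono k (k + i) hk (Nat.le_add_right _ _)

lemma term_pos (hg : Good σ) (hk : 1 ≤ k) (n : ℕ) :
    0 < (∏ i ∈ Finset.range (n + 1), (σ (k + i) : ℝ))⁻¹ :=
  inv_pos.2 (prod_pos hg hk (n + 1))

lemma sigma_pos (hg : Good σ) (hk : 1 ≤ k) : (0 : ℝ) < (σ k : ℝ) := by
  have := hg.two_le k hk
  have : (2 : ℝ) ≤ (σ k : ℝ) := by exact_mod_cast this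
  linarith

lemma term_le (hg : Good σ) (hk : 1 ≤ k) (n : ℕ) :
    (∏ i ∈ Finset.range (n + 1), (σ (k + i) : ℝ))⁻¹ ≤ ((σ k : ℝ)⁻¹) ^ (n + 1) := by
  rw [inv_pow]
  exact inv_anti₀ (pow_pos (sigma_pos hg hk) _) (prod_lower hg hk (n + 1))

lemma summable_geom_aux (hg : Good σ) (hk : 1 ≤ k) :
    Summable fun n : ℕ => ((σ k : ℝ)⁻¹) ^ (n + 1) := by
  have h2 : (2 : ℝ) ≤ (σ k : ℝ) := by exact_mod_cast hg.two_le k hk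
  have hr0 : (0 : ℝ) ≤ (σ k : ℝ)⁻¹ := by positivity
  have hr1 : (σ k : ℝ)⁻¹ < 1 := by
    rw [inv_lt_one_iff₀]; right; linarith
  have := (summable_geometric_of_lt_one hr0 hr1).mul_right ((σ k : ℝ)⁻¹)
  exact this.congr fun n => (pow_succ _ _).symm

lemma summable_t (hg : Good σ) (hk : 1 ≤ k) :
    Summable fun n : ℕ => (∏ i ∈ Finset.range (n + 1), (σ (k + i) : ℝ))⁻¹ :=
  Summable.of_nonneg_of_le (fun n => (term_pos hg hk n).le) (term_le hg hk)
    (summable_geom_aux hg hk)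

lemma t_pos (hg : Good σ) (hk : 1 ≤ k) : 0 < t σ k :=
  Summable.tsum_pos (summable_t hg hk) (fun n => (term_pos hg hk n).le) 0 (term_pos hg hk 0)

lemma tsum_geom_aux (hg : Good σ) (hk : 1 ≤ k) :
    ∑' n : ℕ, ((σ k : ℝ)⁻¹) ^ (n + 1) = ((σ k : ℝ) - 1)⁻¹ := by
  have h2 : (2 : ℝ) ≤ (σ k : ℝ) := by exact_mod_cast hg.two_le k hk
  have hr0 : (0 : ℝ) ≤ (σ k : ℝ)⁻¹ := by positivity
  have hr1 : (σ k : ℝ)⁻¹ < 1 := by rw [inv_lt_one_iff₀]; right; linarith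
  have h1 : ∀ n : ℕ, ((σ k : ℝ)⁻¹) ^ (n + 1) = (σ k : ℝ)⁻¹ * ((σ k : ℝ)⁻¹) ^ n :=
    fun n => by ring
  rw [tsum_congr h1, tsum_mul_left, tsum_geometric_of_lt_one hr0 hr1]
  have hσ0 : (σ k : ℝ) ≠ 0 := by linarith
  have hσ1 : (σ k : ℝ) - 1 ≠ 0 := by linarith
  have h1r : 1 - (σ k : ℝ)⁻¹ ≠ 0 := by
    intro h
    have : (σ k : ℝ)⁻¹ = 1 := by linarith
    rw [this] at hr1; exact absurd hr1 (lt_irrefl _)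
  field_simp

lemma t_lt (hg : Good σ) (hk : 1 ≤ k) : t σ k < ((σ k : ℝ) - 1)⁻¹ := by
  obtain ⟨m, hm1, hm⟩ := hg.unbdd (σ k)
  have hmk : k < m := by
    by_contra h
    push_neg at h
    exact absurd (hg.mono m k hm1 h) (by omega)
  set N := m - k with hNdef
  have hkN : k + N = m := by omega
  have hstrict : (∏ i ∈ Finset.range (N + 1), (σ (k + i) : ℝ))⁻¹
      < ((σ k : ℝ)⁻¹) ^ (N + 1) := by
    rw [inv_pow]
    apply inv_strictAnti₀ (pow_pos (sigma_pos hg hk) _)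
    rw [Finset.prod_range_succ, pow_succ]
    have h1 := prod_lower hg hk N
    have h2 : (σ k : ℝ) < (σ (k + N) : ℝ) := by
      rw [hkN]; exact_mod_cast hm
    have hp : (0 : ℝ) < ((σ k : ℝ)) ^ N := pow_pos (sigma_pos hg hk) _
    calc ((σ k : ℝ)) ^ N * (σ k : ℝ)
        < ((σ k : ℝ)) ^ N * (σ (k + N) : ℝ) := by
          exact mul_lt_mul_of_pos_left h2 hp
      _ ≤ (∏ i ∈ Finset.range N, (σ (k + i) : ℝ)) * (σ (k + N) : ℝ) := by
          apply mul_le_mul_of_nonneg_right h1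
          positivity
  calc t σ k < ∑' n : ℕ, ((σ k : ℝ)⁻¹) ^ (n + 1) :=
        Summable.tsum_lt_tsum (term_le hg hk) hstrict (summable_t hg hk) (summable_geom_aux hg hk)
    _ = ((σ k : ℝ) - 1)⁻¹ := tsum_geom_aux hg hk

lemma t_rec (hg : Good σ) (hk : 1 ≤ k) : (σ k : ℝ) * t σ k = 1 + t σ (k + 1) := by
  have hs := summable_t hg hk
  have hσ0 : (σ k : ℝ) ≠ 0 := (sigma_pos hg hk).ne'
  have e2 : ∀ n : ℕ, (∏ i ∈ Finset.range (n + 1 + 1), (σ (k + i) : ℝ))⁻¹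
      = (σ k : ℝ)⁻¹ * (∏ i ∈ Finset.range (n + 1), (σ (k + 1 + i) : ℝ))⁻¹ := by
    intro n
    rw [Finset.prod_range_succ' (fun i => (σ (k + i) : ℝ)) (n + 1)]
    simp only [add_zero]
    rw [mul_inv, mul_comm]
    congr 2
    apply Finset.prod_congr rfl
    intro i _
    congr 2
    omega
  have e1 : t σ k = (σ k : ℝ)⁻¹ + (σ k : ℝ)⁻¹ * t σ (k + 1) := by
    rw [t, Summable.tsum_eq_zero_add hs]
    congr 1
    · simp
    · rw [tsum_congr e2, tsum_mul_left, t]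
  rw [e1, mul_add, mul_inv_cancel₀ hσ0, ← mul_assoc, mul_inv_cancel₀ hσ0, one_mul]

lemma inv_le_t (hg : Good σ) (hk : 1 ≤ k) : (σ k : ℝ)⁻¹ ≤ t σ k := by
  have := Summable.le_tsum (summable_t hg hk) 0 (fun j _ => (term_pos hg hk j).le)
  simpa [t] using this

lemma t_bounds (hg : Good σ) (hk : 1 ≤ k) :
    (σ k : ℝ) - 1 < (t σ k)⁻¹ ∧ (t σ k)⁻¹ ≤ (σ k : ℝ) := by
  have h2 : (2 : ℝ) ≤ (σ k : ℝ) := by exact_mod_cast hg.two_le k hk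
  have hp := t_pos hg hk
  constructor
  · have h1 : (0 : ℝ) < (σ k : ℝ) - 1 := by linarith
    have := inv_strictAnti₀ hp (t_lt hg hk)
    rwa [inv_inv] at this
  · have h0 : (0 : ℝ) < (σ k : ℝ)⁻¹ := by positivity
    have := inv_anti₀ h0 (inv_le_t hg hk)
    rwa [inv_inv] at this

lemma ceil_int_t (hg : Good σ) (hk : 1 ≤ k) : ⌈(t σ k)⁻¹⌉ = (σ k : ℤ) := by
  obtain ⟨h1, h2⟩ := t_bounds hg hk
  rw [Int.ceil_eq_iff]
  constructor
  · push_cast; linarith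
  · push_cast; linarith

lemma ceil_nat_t (hg : Good σ) (hk : 1 ≤ k) : ⌈(t σ k)⁻¹⌉₊ = σ k := by
  obtain ⟨h1, h2⟩ := t_bounds hg hk
  have hσ2 := hg.two_le k hk
  rw [Nat.ceil_eq_iff (by omega)]
  constructor
  · rw [Nat.cast_sub (by omega)]; push_cast; linarith
  · exact h2

lemma engelT_t (hg : Good σ) (hk : 1 ≤ k) : engelT (t σ k) = t σ (k + 1) := by
  rw [engelT, if_neg (t_pos hg hk).ne', ceil_int_t hg hk]
  have := t_rec hg hk
  push_cast
  linarith [this]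

lemma iterate_t (hg : Good σ) {x : ℝ} (hx1 : x = t σ 1) (n : ℕ) :
    engelT^[n] x = t σ (n + 1) := by
  induction n with
  | zero => simpa using hx1
  | succ n ih =>
    rw [Function.iterate_succ_apply', ih, engelT_t hg (by omega)]

lemma digit_t (hg : Good σ) {x : ℝ} (hx1 : x = t σ 1) (n : ℕ) :
    engelDigit (n + 1) x = σ (n + 1) := by
  rw [engelDigit]
  simp only [Nat.add_sub_cancel]
  rw [iterate_t hg hx1 n]
  exact ceil_nat_t hg (by omega)

lemma int_rep (hg : Good σ) (N : ℕ) :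
    ∃ c : ℕ, (∏ j ∈ Finset.Icc 1 N, (σ j : ℝ)) * t σ 1 = (c : ℝ) + t σ (N + 1) := by
  induction N with
  | zero => exact ⟨0, by simp⟩
  | succ N ih =>
    obtain ⟨c, hc⟩ := ih
    refine ⟨σ (N + 1) * c + 1, ?_⟩
    rw [Finset.prod_Icc_succ_top (by omega) (fun j => (σ j : ℝ))]
    have hrec := t_rec hg (show 1 ≤ N + 1 by omega)
    have h1 : (∏ j ∈ Finset.Icc 1 N, (σ j : ℝ)) * (σ (N + 1) : ℝ) * t σ 1
        = (σ (N + 1) : ℝ) * ((∏ j ∈ Finset.Icc 1 N, (σ j : ℝ)) * t σ 1) := by ring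
    rw [h1, hc, mul_add, hrec]
    push_cast
    ring

lemma irrational_t (hg : Good σ) {x : ℝ} (hx1 : x = t σ 1) : Irrational x := by
  rintro ⟨r, hr⟩
  obtain ⟨m, hm1, hm⟩ := hg.unbdd (r.den + 1)
  set N := m with hNdef
  have hσN : r.den + 1 < σ (N + 1) :=
    lt_of_lt_of_le hm (hg.mono m (N + 1) hm1 (by omega))
  obtain ⟨c, hc⟩ := int_rep hg N
  have hN1 : 1 ≤ N + 1 := by omega
  have hpos := t_pos hg hN1
  have hlt := t_lt hg hN1
  have hden0 : (0 : ℝ) < (r.den : ℝ) := by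
    have := r.pos
    exact_mod_cast this
  have hσ1 : (0 : ℝ) < (σ (N + 1) : ℝ) - 1 := by
    have : (2 : ℝ) ≤ (σ (N + 1) : ℝ) := by exact_mod_cast hg.two_le _ hN1
    linarith
  have hden_lt : (r.den : ℝ) < (σ (N + 1) : ℝ) - 1 := by
    have : ((r.den : ℝ) + 1) < (σ (N + 1) : ℝ) := by exact_mod_cast hσN
    linarith
  have hqt : (r.den : ℝ) * t σ (N + 1) < 1 := by
    have hinv : ((σ (N + 1) : ℝ) - 1) * ((σ (N + 1) : ℝ) - 1)⁻¹ = 1 :=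
      mul_inv_cancel₀ hσ1.ne'
    have hi0 : (0 : ℝ) < ((σ (N + 1) : ℝ) - 1)⁻¹ := by positivity
    calc (r.den : ℝ) * t σ (N + 1)
        < (r.den : ℝ) * ((σ (N + 1) : ℝ) - 1)⁻¹ := by
          exact mul_lt_mul_of_pos_left hlt hden0
      _ < ((σ (N + 1) : ℝ) - 1) * ((σ (N + 1) : ℝ) - 1)⁻¹ := by
          exact mul_lt_mul_of_pos_right hden_lt hi0
      _ = 1 := hinv
  have hqt0 : 0 < (r.den : ℝ) * t σ (N + 1) := by positivity
  -- integrality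
  have hx1' : t σ 1 = (r : ℝ) := by rw [← hx1, ← hr]
  have hP : (∏ j ∈ Finset.Icc 1 N, (σ j : ℝ)) = ((∏ j ∈ Finset.Icc 1 N, σ j : ℕ) : ℝ) := by
    push_cast
    rfl
  have hdenr : ((r.den : ℝ)) * (r : ℝ) = (r.num : ℝ) := by
    rw [Rat.cast_def]
    field_simp
  have ht : t σ (N + 1) = ((∏ j ∈ Finset.Icc 1 N, σ j : ℕ) : ℝ) * (r : ℝ) - (c : ℝ) := by
    rw [← hP, ← hx1']
    linarith [hc]
  obtain ⟨z, hzr⟩ : ∃ z : ℤ, ((z : ℤ) : ℝ) = (r.den : ℝ) * t σ (N + 1) := by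
    refine ⟨((∏ j ∈ Finset.Icc 1 N, σ j : ℕ) : ℤ) * r.num - (r.den : ℤ) * c, ?_⟩
    rw [ht]
    push_cast
    rw [← hdenr]
    ring
  have hz0 : (0 : ℤ) < z := by
    have : (0 : ℝ) < ((z : ℤ) : ℝ) := hzr ▸ hqt0
    exact_mod_cast this
  have hz1 : z < 1 := by
    have : ((z : ℤ) : ℝ) < 1 := hzr ▸ hqt
    exact_mod_cast this
  omega

end EngelAux

/-- For `α > 0`, the number `x = Σ_{n≥1} 1/(σ_1⋯σ_n)` with Engel digits
`σ_n = ⌈(n+1)^{1/α}⌉` is irrational and satisfies `λ(x) = α`. -/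
theorem engelLambda_of_ceil_rpow_digits (α : ℝ) (hα : 0 < α) (σ : ℕ → ℕ)
    (hσ : ∀ n, 1 ≤ n → σ n = ⌈((n : ℝ) + 1) ^ (1 / α)⌉₊) (x : ℝ)
    (hx : x = ∑' n : ℕ, (∏ j ∈ Finset.Icc 1 (n + 1), (σ j : ℝ))⁻¹) :
    Irrational x ∧ engelLambda x = ENNReal.ofReal α := by
  have hαinv : 0 < 1 / α := by positivity
  -- Good σ
  have h2 : ∀ k, 1 ≤ k → 2 ≤ σ k := by
    intro k hk
    rw [hσ k hk]
    have h1 : (1 : ℝ) < ((k : ℝ) + 1) ^ (1 / α) := by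
      rw [Real.one_lt_rpow_iff_of_pos (by positivity)]
      left
      constructor
      · have : (1 : ℝ) ≤ (k : ℝ) := by exact_mod_cast hk
        linarith
      · exact hαinv
    have := Nat.lt_ceil.mpr (show ((1 : ℕ) : ℝ) < ((k : ℝ) + 1) ^ (1 / α) by exact_mod_cast h1)
    omega
  have hmono : ∀ a b, 1 ≤ a → a ≤ b → σ a ≤ σ b := by
    intro a b ha hab
    rw [hσ a ha, hσ b (ha.trans hab)]
    apply Nat.ceil_le_ceil
    apply Real.rpow_le_rpow (by positivity) _ hαinv.le
    have : (a : ℝ) ≤ (b : ℝ) := by exact_mod_cast hab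
    linarith
  have hub : ∀ m, ∃ n, 1 ≤ n ∧ m < σ n := by
    intro M
    refine ⟨⌈(M : ℝ) ^ α⌉₊ + 1, by omega, ?_⟩
    set n := ⌈(M : ℝ) ^ α⌉₊ + 1 with hn
    rw [hσ n (by omega)]
    apply Nat.lt_ceil.mpr
    have hMα : ((M : ℝ)) ^ α < (n : ℝ) + 1 := by
      have h1 : ((M : ℝ)) ^ α ≤ (⌈(M : ℝ) ^ α⌉₊ : ℝ) := Nat.le_ceil _
      have h2 : ((⌈(M : ℝ) ^ α⌉₊ : ℕ) : ℝ) < (n : ℝ) + 1 := by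
        rw [hn]; push_cast; linarith
      linarith
    calc (M : ℝ) = (((M : ℝ)) ^ α) ^ (1 / α) := by
          rw [← Real.rpow_mul (by positivity), mul_one_div, div_self hα.ne', Real.rpow_one]
      _ < ((n : ℝ) + 1) ^ (1 / α) := by
          apply Real.rpow_lt_rpow (by positivity) hMα hαinv
  have hg : EngelAux.Good σ := ⟨h2, hmono, hub⟩
  -- x = t σ 1
  have hx1 : x = EngelAux.t σ 1 := by
    rw [hx, EngelAux.t]
    apply tsum_congr
    intro n
    congr 1
    rw [← Finset.Ico_add_one_right_eq_Icc, Finset.prod_Ico_eq_prod_range]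
    norm_num
  have hdig : ∀ n : ℕ, engelDigit (n + 1) x = σ (n + 1) := EngelAux.digit_t hg hx1
  refine ⟨EngelAux.irrational_t hg hx1, ?_⟩
  -- the summability set is exactly (α, ∞)
  have hc1 : ∀ n : ℕ, (1 : ℝ) ≤ ((n : ℝ) + 2) ^ (1 / α) := by
    intro n
    apply Real.one_le_rpow (by linarith [Nat.cast_nonneg (α := ℝ) n]) hαinv.le
  have hcle : ∀ n : ℕ, ((n : ℝ) + 2) ^ (1 / α) ≤ (σ (n + 1) : ℝ) := by
    intro n
    rw [hσ (n + 1) (by omega)]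
    have he : (((n + 1 : ℕ) : ℝ) + 1) = ((n : ℝ) + 2) := by push_cast; ring
    rw [he]
    exact Nat.le_ceil _
  have hcge : ∀ n : ℕ, (σ (n + 1) : ℝ) ≤ 2 * ((n : ℝ) + 2) ^ (1 / α) := by
    intro n
    rw [hσ (n + 1) (by omega)]
    have he : (((n + 1 : ℕ) : ℝ) + 1) = ((n : ℝ) + 2) := by push_cast; ring
    rw [he]
    have h := Nat.ceil_lt_add_one (show (0:ℝ) ≤ ((n : ℝ) + 2) ^ (1 / α) by positivity)
    have := hc1 n
    linarith
  have hshift : ∀ s : ℝ, (Summable fun n : ℕ => ((n : ℝ) + 2) ^ (-(s / α))) ↔ s / α > 1 := by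
    intro s
    constructor
    · intro hsum
      have : Summable fun n : ℕ => (((n + 2 : ℕ) : ℝ)) ^ (-(s / α)) := by
        apply hsum.congr
        intro n
        congr 1
        push_cast
        ring
      have h2 := (summable_nat_add_iff (f := fun n : ℕ => ((n : ℝ)) ^ (-(s / α))) 2).mp this
      have := Real.summable_nat_rpow.mp h2
      linarith
    · intro hs
      have h2 : Summable fun n : ℕ => ((n : ℝ)) ^ (-(s / α)) :=
        Real.summable_nat_rpow.mpr (by linarith)
      have h3 := (summable_nat_add_iff (f := fun n : ℕ => ((n : ℝ)) ^ (-(s / α))) 2).mpr h2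
      apply h3.congr
      intro n
      congr 1
      push_cast
      ring
  have hσpos : ∀ n : ℕ, (0 : ℝ) < (σ (n + 1) : ℝ) := by
    intro n
    have h := h2 (n + 1) (by omega)
    have : (2 : ℝ) ≤ (σ (n + 1) : ℝ) := by exact_mod_cast h
    linarith
  have hSummIff : ∀ s : ℝ, 0 ≤ s →
      ((Summable fun n : ℕ => ((σ (n + 1) : ℝ)) ^ (-s)) ↔ α < s) := by
    intro s hs0
    constructor
    · intro hsum
      by_contra h
      push_neg at h
      -- s ≤ α, derive summability of the divergent series
      have hb : Summable fun n : ℕ => (2 : ℝ) ^ (-s) * (((n : ℝ) + 2) ^ (1 / α)) ^ (-s) := by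
        apply Summable.of_nonneg_of_le _ _ hsum
        · intro n; positivity
        · intro n
          rw [← Real.mul_rpow (by norm_num) (by positivity)]
          exact Real.rpow_le_rpow_of_nonpos (hσpos n) (hcge n) (by linarith)
      have hb2 : Summable fun n : ℕ => (((n : ℝ) + 2) ^ (1 / α)) ^ (-s) := by
        have h20 : (0:ℝ) < (2 : ℝ) ^ (-s) := by positivity
        have := hb.mul_left ((2 : ℝ) ^ (-s))⁻¹
        apply this.congr
        intro n
        rw [← mul_assoc, inv_mul_cancel₀ h20.ne', one_mul]
      have hb3 : Summable fun n : ℕ => ((n : ℝ) + 2) ^ (-(s / α)) := by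
        apply hb2.congr
        intro n
        rw [← Real.rpow_mul (by positivity)]
        congr 1
        ring
      have := (hshift s).mp hb3
      have : α < s := by
        have := (one_lt_div hα).mp this
        exact this
      linarith
    · intro hs
      have hs0' : 0 ≤ -s → True := fun _ => trivial
      apply Summable.of_nonneg_of_le (g := fun n : ℕ => ((σ (n + 1) : ℝ)) ^ (-s))
        (fun n => by positivity)
        (fun n => Real.rpow_le_rpow_of_nonpos (by positivity) (hcle n) (by linarith))
      have hb3 : Summable fun n : ℕ => ((n : ℝ) + 2) ^ (-(s / α)) :=
        (hshift s).mpr ((one_lt_div hα).mpr hs)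
      apply hb3.congr
      intro n
      rw [← Real.rpow_mul (by positivity)]
      congr 1
      ring
  -- identify the set
  have hset : {s : ℝ | 0 ≤ s ∧ Summable fun n : ℕ => ((engelDigit (n + 1) x : ℝ)) ^ (-s)}
      = Set.Ioi α := by
    ext s
    simp only [Set.mem_setOf_eq, Set.mem_Ioi]
    have hEq : (Summable fun n : ℕ => ((engelDigit (n + 1) x : ℝ)) ^ (-s))
        ↔ (Summable fun n : ℕ => ((σ (n + 1) : ℝ)) ^ (-s)) := by
      apply summable_congr
      intro n
      rw [hdig n]
    constructor
    · rintro ⟨hs0, hsum⟩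
      exact (hSummIff s hs0).mp (hEq.mp hsum)
    · intro hs
      have hs0 : 0 ≤ s := le_of_lt (hα.trans hs)
      exact ⟨hs0, hEq.mpr ((hSummIff s hs0).mpr hs)⟩
  rw [engelLambda, hset]
  -- sInf (ofReal '' Ioi α) = ofReal α
  apply le_antisymm
  · apply ENNReal.le_of_forall_pos_le_add
    intro ε hε _
    have hmem : ENNReal.ofReal (α + (ε : ℝ)) ∈ ENNReal.ofReal '' Set.Ioi α := by
      refine ⟨α + (ε : ℝ), ?_, rfl⟩
      simp only [Set.mem_Ioi]
      have : (0 : ℝ) < (ε : ℝ) := hε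
      linarith
    refine le_trans (sInf_le hmem) ?_
    rw [ENNReal.ofReal_add hα.le (by exact_mod_cast hε.le), ENNReal.ofReal_coe_nnreal]
  · apply le_sInf
    rintro b ⟨s, hs, rfl⟩
    exact ENNReal.ofReal_le_ofReal (le_of_lt hs)
end

section
/- For every α ∈ [0,∞], the level set {x ∈ (0,1) : λ(x) = α} is uncountable. -/
open Filter MeasureTheory Set
open scoped ENNReal NNReal

namespace EngelAux

/-- partial product of inverse digits -/
noncomputable def P (b : ℕ → ℕ) (n : ℕ) : ℝ := ∏ j ∈ Finset.range (n+1), ((b j : ℝ))⁻¹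

/-- the value with given Engel digits -/
noncomputable def E (b : ℕ → ℕ) : ℝ := ∑' n, P b n

structure Adm (b : ℕ → ℕ) : Prop where
  two_le : ∀ n, 2 ≤ b n
  mono : Monotone b
  unbdd : ∀ N : ℕ, ∃ n, N ≤ b n

variable {b : ℕ → ℕ}

lemma Adm.pos (hb : Adm b) (j : ℕ) : (0:ℝ) < (b j : ℝ) := by
  have := hb.two_le j; positivity

lemma P_pos (hb : Adm b) (n : ℕ) : 0 < P b n := by
  apply Finset.prod_pos; intro j _; exact inv_pos.2 (hb.pos j)

lemma P_le (hb : Adm b) (n : ℕ) : P b n ≤ ((b 0 : ℝ))⁻¹ ^ (n+1) := by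
  have : ((b 0 : ℝ))⁻¹ ^ (n+1) = ∏ _j ∈ Finset.range (n+1), ((b 0:ℝ))⁻¹ := by
    rw [Finset.prod_const, Finset.card_range]
  rw [P, this]
  apply Finset.prod_le_prod
  · intro j _; exact (inv_pos.2 (hb.pos j)).le
  · intro j _
    exact inv_anti₀ (hb.pos 0) (by exact_mod_cast hb.mono (Nat.zero_le j))

lemma summable_P (hb : Adm b) : Summable (P b) := by
  apply Summable.of_nonneg_of_le (fun n => (P_pos hb n).le) (P_le hb)
  have h0 : ((b 0 : ℝ))⁻¹ < 1 := by
    rw [inv_lt_one_iff₀]; right; exact_mod_cast lt_of_lt_of_le one_lt_two (hb.two_le 0)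
  have h0' : (0:ℝ) ≤ ((b 0 : ℝ))⁻¹ := (inv_pos.2 (hb.pos 0)).le
  exact ((summable_geometric_of_lt_one h0' h0).mul_left _).congr
    (fun n => by rw [pow_succ, mul_comm])

def shift (b : ℕ → ℕ) : ℕ → ℕ := fun n => b (n+1)

lemma Adm.shift (hb : Adm b) : Adm (EngelAux.shift b) :=
  ⟨fun n => hb.two_le _, fun m n h => hb.mono (by omega),
   fun N => by obtain ⟨n, hn⟩ := hb.unbdd N; exact ⟨n, le_trans hn (by exact_mod_cast hb.mono (Nat.le_succ n) : b n ≤ b (n+1))⟩⟩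

lemma P_succ (n : ℕ) : P b (n+1) = ((b 0:ℝ))⁻¹ * P (shift b) n := by
  rw [P, P, Finset.prod_range_succ']
  rw [mul_comm]; rfl

lemma E_rec (hb : Adm b) : E b = ((b 0:ℝ))⁻¹ * (1 + E (shift b)) := by
  rw [E, Summable.tsum_eq_zero_add (summable_P hb)]
  have : ∑' n, P b (n+1) = ((b 0:ℝ))⁻¹ * E (shift b) := by
    rw [E, ← tsum_mul_left]
    exact tsum_congr fun n => P_succ n
  rw [this, P]
  simp [mul_add]

lemma E_pos (hb : Adm b) : 0 < E b :=
  Summable.tsum_pos (summable_P hb) (fun n => (P_pos hb n).le) 0 (P_pos hb 0)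

lemma E_gt (hb : Adm b) : ((b 0:ℝ))⁻¹ < E b := by
  rw [E_rec hb]
  have h1 : (0:ℝ) < E (shift b) := E_pos hb.shift
  have h0 : (0:ℝ) < ((b 0:ℝ))⁻¹ := inv_pos.2 (hb.pos 0)
  nlinarith

lemma E_lt (hb : Adm b) : E b < ((b 0:ℝ) - 1)⁻¹ := by
  -- strict comparison with geometric series
  obtain ⟨j, hj⟩ := hb.unbdd (b 0 + 1)
  have hbj : b 0 < b j := by omega
  have hgs : Summable (fun n : ℕ => ((b 0:ℝ))⁻¹ ^ (n+1)) := by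
    have h0 : ((b 0 : ℝ))⁻¹ < 1 := by
      rw [inv_lt_one_iff₀]; right; exact_mod_cast lt_of_lt_of_le one_lt_two (hb.two_le 0)
    have h0' : (0:ℝ) ≤ ((b 0 : ℝ))⁻¹ := (inv_pos.2 (hb.pos 0)).le
    exact ((summable_geometric_of_lt_one h0' h0).mul_left _).congr
      (fun n => by rw [pow_succ, mul_comm])
  have hstrict : P b j < ((b 0:ℝ))⁻¹ ^ (j+1) := by
    have : ((b 0 : ℝ))⁻¹ ^ (j+1) = ∏ _k ∈ Finset.range (j+1), ((b 0:ℝ))⁻¹ := by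
      rw [Finset.prod_const, Finset.card_range]
    rw [P, this]
    apply Finset.prod_lt_prod
    · intro i _; exact inv_pos.2 (hb.pos i)
    · intro i _; exact inv_anti₀ (hb.pos 0) (by exact_mod_cast hb.mono (Nat.zero_le i))
    · exact ⟨j, Finset.self_mem_range_succ j, by
        apply inv_strictAnti₀ (hb.pos 0)
        exact_mod_cast hbj⟩
  have hlt : E b < ∑' n, ((b 0:ℝ))⁻¹ ^ (n+1) :=
    Summable.tsum_lt_tsum (P_le hb) hstrict (summable_P hb) hgs
  have hgeom : ∑' n, ((b 0:ℝ))⁻¹ ^ (n+1) = ((b 0:ℝ) - 1)⁻¹ := by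
    have h0 : ((b 0 : ℝ))⁻¹ < 1 := by
      rw [inv_lt_one_iff₀]; right; exact_mod_cast lt_of_lt_of_le one_lt_two (hb.two_le 0)
    have h0' : (0:ℝ) ≤ ((b 0 : ℝ))⁻¹ := (inv_pos.2 (hb.pos 0)).le
    have := tsum_geometric_of_lt_one h0' h0
    calc ∑' n, ((b 0:ℝ))⁻¹ ^ (n+1) = ∑' n, ((b 0:ℝ))⁻¹ * ((b 0:ℝ))⁻¹ ^ n := by
          exact tsum_congr fun n => by rw [pow_succ, mul_comm]
      _ = ((b 0:ℝ))⁻¹ * (1 - ((b 0:ℝ))⁻¹)⁻¹ := by rw [tsum_mul_left, this]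
      _ = ((b 0:ℝ) - 1)⁻¹ := by
          have hb0 : (b 0 : ℝ) ≠ 0 := (hb.pos 0).ne'
          have : (b 0:ℝ) - 1 ≠ 0 := by
            have : (2:ℝ) ≤ b 0 := by exact_mod_cast hb.two_le 0
            linarith
          field_simp
  rw [hgeom] at hlt; exact hlt

lemma E_lt_one (hb : Adm b) : E b < 1 := by
  have h2 : (2:ℝ) ≤ b 0 := by exact_mod_cast hb.two_le 0
  have := E_lt hb
  have h1 : ((b 0:ℝ) - 1)⁻¹ ≤ 1 := by
    rw [inv_le_one_iff₀]; right; linarith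
  linarith

lemma inv_E_bounds (hb : Adm b) : (b 0:ℝ) - 1 < (E b)⁻¹ ∧ (E b)⁻¹ < (b 0:ℝ) := by
  have h2 : (2:ℝ) ≤ b 0 := by exact_mod_cast hb.two_le 0
  have hE := E_pos hb
  constructor
  · have := E_lt hb
    have h1 : (0:ℝ) < (b 0:ℝ) - 1 := by linarith
    calc (b 0:ℝ) - 1 = (((b 0:ℝ) - 1)⁻¹)⁻¹ := by rw [inv_inv]
      _ < (E b)⁻¹ := by apply inv_strictAnti₀ hE this
  · have := E_gt hb
    calc (E b)⁻¹ < (((b 0:ℝ))⁻¹)⁻¹ := by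
          apply inv_strictAnti₀ (inv_pos.2 (hb.pos 0)) this
      _ = (b 0:ℝ) := inv_inv _

lemma ceil_inv_E (hb : Adm b) : ⌈(E b)⁻¹⌉ = (b 0 : ℤ) := by
  obtain ⟨h1, h2⟩ := inv_E_bounds hb
  rw [Int.ceil_eq_iff]
  constructor
  · push_cast; linarith
  · push_cast; linarith

lemma natCeil_inv_E (hb : Adm b) : ⌈(E b)⁻¹⌉₊ = b 0 := by
  obtain ⟨h1, h2⟩ := inv_E_bounds hb
  rw [Nat.ceil_eq_iff (by have := hb.two_le 0; omega : b 0 ≠ 0)]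
  have h2' : (2:ℝ) ≤ b 0 := by exact_mod_cast hb.two_le 0
  constructor
  · have : ((b 0 - 1 : ℕ) : ℝ) = (b 0 : ℝ) - 1 := by
      have := hb.two_le 0; push_cast [Nat.cast_sub (by omega : 1 ≤ b 0)]; ring
    rw [this]; linarith
  · linarith

lemma engelT_E (hb : Adm b) : engelT (E b) = E (shift b) := by
  rw [engelT, if_neg (E_pos hb).ne', ceil_inv_E hb]
  have := E_rec hb
  have hb0 : (b 0 : ℝ) ≠ 0 := (hb.pos 0).ne'
  push_cast
  field_simp at this
  linarith [this]

lemma iterate_engelT_E (hb : Adm b) (n : ℕ) :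
    engelT^[n] (E b) = E (fun k => b (n + k)) := by
  induction n generalizing b with
  | zero => simp [E]
  | succ m ih =>
    rw [Function.iterate_succ_apply, engelT_E hb, ih hb.shift]
    have h : (fun k => EngelAux.shift b (m + k)) = (fun k => b (m + 1 + k)) := by
      funext k; simp only [EngelAux.shift]; congr 1; omega
    rw [h]

lemma engelDigit_E (hb : Adm b) (n : ℕ) : engelDigit (n+1) (E b) = b n := by
  rw [engelDigit]
  simp only [Nat.add_sub_cancel]
  rw [iterate_engelT_E hb n]
  have hadm : Adm (fun k => b (n + k)) :=
    ⟨fun k => hb.two_le _, fun i j h => hb.mono (by omega),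
     fun N => by obtain ⟨m, hm⟩ := hb.unbdd N; exact ⟨m, le_trans hm (hb.mono (by omega))⟩⟩
  rw [natCeil_inv_E hadm]
  norm_num

lemma E_mem_Ioo (hb : Adm b) : E b ∈ Set.Ioo (0:ℝ) 1 := ⟨E_pos hb, E_lt_one hb⟩

lemma E_inj {b' : ℕ → ℕ} (hb : Adm b) (hb' : Adm b') (h : E b = E b') : b = b' := by
  funext n
  have := engelDigit_E hb n
  rw [h, engelDigit_E hb' n] at this
  omega

lemma engelLambda_E (hb : Adm b) :
    engelLambda (E b) = sInf (ENNReal.ofReal ''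
      {s : ℝ | 0 ≤ s ∧ Summable fun n : ℕ => ((b n : ℝ)) ^ (-s)}) := by
  rw [engelLambda]
  congr 1
  ext s
  constructor <;> rintro ⟨t, ⟨hs, hsum⟩, rfl⟩ <;> refine ⟨t, ⟨hs, ?_⟩, rfl⟩
  · exact hsum.congr fun n => by rw [engelDigit_E hb n]
  · exact hsum.congr fun n => by rw [engelDigit_E hb n]

/-! ### family construction -/

structure Base (a : ℕ → ℕ) : Prop where
  one_le : ∀ n, 1 ≤ a n
  mono : Monotone a
  unbdd : ∀ N : ℕ, ∃ n, N ≤ a n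

def jmp (a : ℕ → ℕ) (n : ℕ) : ℕ :=
  ((Finset.range n).filter (fun m => a m ≠ a (m+1))).card

def bfam (a : ℕ → ℕ) (ω : ℕ → Bool) (n : ℕ) : ℕ :=
  3 * a n + (if ω (jmp a n) then 1 else 0)

variable {a : ℕ → ℕ}

lemma jmp_succ (n : ℕ) :
    jmp a (n+1) = jmp a n + (if a n ≠ a (n+1) then 1 else 0) := by
  rw [jmp, jmp, Finset.range_add_one, Finset.filter_insert]
  by_cases h : a n ≠ a (n+1) <;> simp [h, Finset.card_insert_of_notMem]

lemma jmp_mono : Monotone (jmp a) := by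
  apply monotone_nat_of_le_succ
  intro n; rw [jmp_succ]; omega

lemma const_of_jmp_eq (n d : ℕ) (h : jmp a (n + d) = jmp a n) : a (n + d) = a n := by
  induction d with
  | zero => rfl
  | succ m ih =>
    have h1 : jmp a n ≤ jmp a (n + m) := jmp_mono (by omega)
    have h2 : jmp a (n + m) ≤ jmp a (n + m + 1) := jmp_mono (by omega)
    have h3 : n + (m+1) = n + m + 1 := by omega
    rw [h3] at h
    have hm : jmp a (n + m) = jmp a n := by omega
    have hs := jmp_succ (a := a) (n + m)
    by_cases hc : a (n + m) ≠ a (n + m + 1)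
    · rw [if_pos hc] at hs; omega
    · push_neg at hc
      rw [h3, ← hc]
      exact ih hm

lemma jmp_unbdd (ha : Base a) : ∀ k, ∃ n, k ≤ jmp a n := by
  intro k
  induction k with
  | zero => exact ⟨0, Nat.zero_le _⟩
  | succ k ih =>
    obtain ⟨n, hn⟩ := ih
    obtain ⟨m, hm⟩ := ha.unbdd (a n + 1)
    have hnm : n ≤ m := by
      by_contra h
      have := ha.mono (by omega : m ≤ n)
      omega
    have hne : a m ≠ a n := by omega
    refine ⟨m, ?_⟩
    have h1 : jmp a n ≤ jmp a m := jmp_mono hnm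
    have h2 : jmp a m ≠ jmp a n := by
      intro h
      obtain ⟨d, rfl⟩ : ∃ d, m = n + d := ⟨m - n, by omega⟩
      exact hne (const_of_jmp_eq n d h)
    omega

lemma jmp_surj (ha : Base a) (k : ℕ) : ∃ n, jmp a n = k := by
  classical
  have hex := jmp_unbdd ha k
  obtain ⟨n, hn, hmin⟩ : ∃ n, (k ≤ jmp a n ∧ ∀ m < n, ¬ k ≤ jmp a m) :=
    ⟨Nat.find hex, Nat.find_spec hex, fun m hm => Nat.find_min hex hm⟩
  refine ⟨n, ?_⟩
  cases n with
  | zero => simp [jmp] at hn ⊢; omega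
  | succ m =>
    have hm := hmin m (by omega)
    have h2 := jmp_succ (a := a) m
    by_cases hc : a m ≠ a (m+1) <;> simp [hc] at h2 <;> omega

lemma bfam_bounds (ω : ℕ → Bool) (n : ℕ) :
    3 * a n ≤ bfam a ω n ∧ bfam a ω n ≤ 3 * a n + 1 := by
  rw [bfam]; split <;> omega

lemma bfam_adm (ha : Base a) (ω : ℕ → Bool) : Adm (bfam a ω) := by
  constructor
  · intro n; have := ha.one_le n; rw [bfam]; split <;> omega
  · apply monotone_nat_of_le_succ
    intro n
    rcases eq_or_ne (a n) (a (n+1)) with h | h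
    · have hj : jmp a (n+1) = jmp a n := by
        rw [jmp_succ]; simp [h]
      rw [bfam, bfam, hj, h]
    · have := ha.mono (show n ≤ n + 1 by omega)
      have h1 : a n + 1 ≤ a (n+1) := by omega
      have b1 := bfam_bounds (a := a) ω n
      have b2 := bfam_bounds (a := a) ω (n+1)
      omega
  · intro N
    obtain ⟨n, hn⟩ := ha.unbdd N
    exact ⟨n, le_trans hn (by have := (bfam_bounds (a := a) ω n).1; omega)⟩

lemma bfam_inj (ha : Base a) : Function.Injective (bfam a) := by
  intro ω ω' h
  funext k
  obtain ⟨n, hn⟩ := jmp_surj ha k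
  have := congrFun h n
  rw [bfam, bfam, hn] at this
  rcases hω : ω k <;> rcases hω' : ω' k <;> simp [hω, hω'] at this ⊢

/-- key computation of sInf over an `Ioi`. -/
lemma sInf_ofReal_Ioi {t : ℝ} (ht : 0 ≤ t) :
    sInf (ENNReal.ofReal '' (Set.Ioi t)) = ENNReal.ofReal t := by
  apply le_antisymm
  · apply ENNReal.le_of_forall_pos_le_add
    intro ε hε _
    have hmem : (t + ε/2 : ℝ) ∈ Set.Ioi t := by
      simp only [Set.mem_Ioi]
      have : (0:ℝ) < ε := by exact_mod_cast hε
      linarith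
    calc sInf (ENNReal.ofReal '' (Set.Ioi t)) ≤ ENNReal.ofReal (t + ε/2) :=
          sInf_le ⟨_, hmem, rfl⟩
      _ = ENNReal.ofReal t + ENNReal.ofReal (ε/2) := by
          rw [ENNReal.ofReal_add ht (by positivity)]
      _ ≤ ENNReal.ofReal t + ε := by
          gcongr
          rw [ENNReal.ofReal_le_iff_le_toReal (by simp)]
          simp only [ENNReal.coe_toReal]
          have : (0:ℝ) ≤ ε := by positivity
          linarith
  · apply le_sInf
    rintro x ⟨s, hs, rfl⟩
    exact ENNReal.ofReal_le_ofReal (le_of_lt hs)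

lemma not_countable_funBool : ¬ Countable (ℕ → Bool) := by
  intro h
  obtain ⟨f, hf⟩ := exists_surjective_nat (ℕ → Bool)
  obtain ⟨m, hm⟩ := hf (fun n => ! f n n)
  have := congrFun hm m
  simp at this

lemma level_uncountable (ha : Base a) (α : ℝ≥0∞)
    (hlam : ∀ ω : ℕ → Bool, sInf (ENNReal.ofReal ''
      {s : ℝ | 0 ≤ s ∧ Summable fun n : ℕ => ((bfam a ω n : ℝ)) ^ (-s)}) = α) :
    ¬ Set.Countable {x : ℝ | x ∈ Set.Ioo (0:ℝ) 1 ∧ engelLambda x = α} := by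
  intro hc
  set f : (ℕ → Bool) → ℝ := fun ω => E (bfam a ω) with hfdef
  have hmem : ∀ ω, f ω ∈ {x : ℝ | x ∈ Set.Ioo (0:ℝ) 1 ∧ engelLambda x = α} := fun ω =>
    ⟨E_mem_Ioo (bfam_adm ha ω), by rw [engelLambda_E (bfam_adm ha ω), hlam ω]⟩
  have hinj : Function.Injective f := fun ω ω' h =>
    bfam_inj ha (E_inj (bfam_adm ha ω) (bfam_adm ha ω') h)
  have hrc : (Set.range f).Countable := hc.mono (Set.range_subset_iff.2 hmem)
  have : Countable (Set.range f) := hrc.to_subtype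
  have : Countable (ℕ → Bool) := Countable.of_equiv _ (Equiv.ofInjective f hinj).symm
  exact not_countable_funBool this

lemma not_summable_of_eventually_ge {f g : ℕ → ℝ} (hg0 : ∀ n, 0 ≤ g n)
    (h : ∀ᶠ n in Filter.atTop, g n ≤ f n) (hg : ¬ Summable g) : ¬ Summable f := by
  intro hf
  apply hg
  obtain ⟨N, hN⟩ := Filter.eventually_atTop.1 h
  rw [← summable_nat_add_iff N]
  exact Summable.of_nonneg_of_le (fun n => hg0 _) (fun n => hN _ (by omega))
    ((summable_nat_add_iff N).2 hf)

lemma rpow_neg_anti {x y s : ℝ} (hy : 0 < y) (hxy : y ≤ x) (hs : 0 ≤ s) :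
    x ^ (-s) ≤ y ^ (-s) := by
  rw [Real.rpow_neg (le_trans hy.le hxy), Real.rpow_neg hy.le]
  exact inv_anti₀ (Real.rpow_pos_of_pos hy s) (Real.rpow_le_rpow hy.le hxy hs)

lemma sum_set_eq_Ioi {c : ℕ → ℕ} {t : ℝ} (ht : 0 ≤ t)
    (hup : ∀ s, t < s → Summable fun n : ℕ => ((c n : ℝ)) ^ (-s))
    (hdown : ∀ s, 0 ≤ s → s ≤ t → ¬ Summable fun n : ℕ => ((c n : ℝ)) ^ (-s)) :
    {s : ℝ | 0 ≤ s ∧ Summable fun n : ℕ => ((c n : ℝ)) ^ (-s)} = Set.Ioi t := by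
  ext s
  simp only [Set.mem_setOf_eq, Set.mem_Ioi]
  constructor
  · rintro ⟨hs0, hsum⟩
    by_contra h
    exact hdown s hs0 (by linarith [not_lt.1 h]) hsum
  · intro h
    exact ⟨le_trans ht h.le, hup s h⟩

/-! ### case 0 < t < ∞ -/

section TPos
variable {t : ℝ} (ht : 0 < t)

noncomputable def abase (t : ℝ) : ℕ → ℕ := fun n => ⌈((n+1 : ℕ) : ℝ) ^ (1/t)⌉₊

lemma abase_lb (n : ℕ) : ((n+1 : ℕ) : ℝ) ^ (1/t) ≤ (abase t n : ℝ) := Nat.le_ceil _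

lemma abase_ub (n : ℕ) : (abase t n : ℝ) ≤ ((n+1 : ℕ) : ℝ) ^ (1/t) + 1 :=
  (Nat.ceil_lt_add_one (Real.rpow_nonneg (by positivity) _)).le

lemma one_le_rpow_nat (n : ℕ) (ht : 0 < t) : (1:ℝ) ≤ ((n+1 : ℕ) : ℝ) ^ (1/t) :=
  Real.one_le_rpow (by exact_mod_cast Nat.one_le_iff_ne_zero.2 (by omega)) (by positivity)

include ht in
lemma abase_base : Base (abase t) := by
  constructor
  · intro n
    have h1 := one_le_rpow_nat (t := t) n ht
    have := abase_lb (t := t) n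
    have : (1:ℝ) ≤ (abase t n : ℝ) := le_trans h1 this
    exact_mod_cast this
  · intro m n hmn
    apply Nat.ceil_le_ceil
    apply Real.rpow_le_rpow (by positivity) (by exact_mod_cast by omega) (by positivity)
  · intro N
    refine ⟨⌈(N:ℝ) ^ t⌉₊, ?_⟩
    have h1 : ((N:ℝ) ^ t) ≤ ((⌈(N:ℝ) ^ t⌉₊ + 1 : ℕ) : ℝ) := by
      push_cast
      have := Nat.le_ceil ((N:ℝ) ^ t)
      linarith
    have h2 : ((N:ℝ) ^ t) ^ (1/t) ≤ ((⌈(N:ℝ) ^ t⌉₊ + 1 : ℕ) : ℝ) ^ (1/t) :=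
      Real.rpow_le_rpow (by positivity) h1 (by positivity)
    have h3 : ((N:ℝ) ^ t) ^ (1/t) = (N:ℝ) := by
      rw [← Real.rpow_mul (by positivity), mul_one_div, div_self ht.ne', Real.rpow_one]
    have h4 := abase_lb (t := t) ⌈(N:ℝ) ^ t⌉₊
    have : (N : ℝ) ≤ (abase t ⌈(N:ℝ) ^ t⌉₊ : ℝ) :=
      calc (N:ℝ) = ((N:ℝ) ^ t) ^ (1/t) := h3.symm
        _ ≤ _ := le_trans h2 h4
    exact_mod_cast this

include ht in
lemma clb (ω : ℕ → Bool) (n : ℕ) :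
    ((n+1 : ℕ) : ℝ) ^ (1/t) ≤ ((bfam (abase t) ω n : ℝ)) := by
  have h1 := (bfam_bounds (a := abase t) ω n).1
  have h2 := abase_lb (t := t) n
  have : (abase t n : ℝ) ≤ (bfam (abase t) ω n : ℝ) := by
    exact_mod_cast le_trans (by omega : abase t n ≤ 3 * abase t n) h1
  linarith

include ht in
lemma cub (ω : ℕ → Bool) (n : ℕ) :
    ((bfam (abase t) ω n : ℝ)) ≤ 7 * ((n+1 : ℕ) : ℝ) ^ (1/t) := by
  have h1 := (bfam_bounds (a := abase t) ω n).2
  have h2 := abase_ub (t := t) n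
  have h3 := one_le_rpow_nat (t := t) n ht
  have : (bfam (abase t) ω n : ℝ) ≤ 3 * (abase t n : ℝ) + 1 := by exact_mod_cast h1
  nlinarith

include ht in
lemma cpos (ω : ℕ → Bool) (n : ℕ) : (0:ℝ) < ((bfam (abase t) ω n : ℝ)) :=
  lt_of_lt_of_le (by linarith [one_le_rpow_nat (t := t) n ht] :
    (0:ℝ) < ((n+1 : ℕ) : ℝ) ^ (1/t)) (clb ht ω n)

lemma summable_shift (p : ℝ) (hp : p < -1) :
    Summable fun n : ℕ => ((n+1 : ℕ) : ℝ) ^ p := by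
  have := Real.summable_nat_rpow.2 hp
  have h := (summable_nat_add_iff (f := fun n : ℕ => ((n : ℕ) : ℝ) ^ p) 1).2 this
  exact h.congr fun n => by norm_num

lemma not_summable_shift (p : ℝ) (hp : -1 ≤ p) :
    ¬ Summable fun n : ℕ => ((n+1 : ℕ) : ℝ) ^ p := by
  intro h
  have h2 := (summable_nat_add_iff (f := fun n : ℕ => ((n : ℕ) : ℝ) ^ p) 1).1
    (h.congr fun n => by norm_num)
  rw [Real.summable_nat_rpow] at h2
  linarith

include ht in
lemma tpos_up (ω : ℕ → Bool) (s : ℝ) (hs : t < s) :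
    Summable fun n : ℕ => ((bfam (abase t) ω n : ℝ)) ^ (-s) := by
  have hs0 : 0 ≤ s := ht.le.trans hs.le
  have hsum : Summable fun n : ℕ => (((n+1 : ℕ) : ℝ) ^ (1/t)) ^ (-s) := by
    apply (summable_shift ((1/t) * (-s)) ?_).congr
      fun n => (Real.rpow_mul (by positivity) _ _)
    have h1 : 1 < s / t := (one_lt_div ht).2 hs
    have heq : (1/t) * (-s) = -(s/t) := by ring
    rw [heq]; linarith
  exact Summable.of_nonneg_of_le
    (fun n => (Real.rpow_pos_of_pos (cpos ht ω n) _).le)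
    (fun n => rpow_neg_anti (Real.rpow_pos_of_pos (by positivity) _) (clb ht ω n) hs0)
    hsum

include ht in
lemma tpos_down (ω : ℕ → Bool) (s : ℝ) (hs0 : 0 ≤ s) (hst : s ≤ t) :
    ¬ Summable fun n : ℕ => ((bfam (abase t) ω n : ℝ)) ^ (-s) := by
  apply not_summable_of_eventually_ge
    (g := fun n : ℕ => (7:ℝ)^(-s) * ((n+1:ℕ):ℝ) ^ (-1:ℝ))
  · intro n; positivity
  · apply Filter.Eventually.of_forall; intro n
    have h1 : (7 * ((n+1:ℕ):ℝ)^(1/t)) ^ (-s) ≤ ((bfam (abase t) ω n : ℝ)) ^ (-s) :=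
      rpow_neg_anti (cpos ht ω n) (cub ht ω n) hs0
    have h2 : (7 * ((n+1:ℕ):ℝ)^(1/t)) ^ (-s)
        = (7:ℝ)^(-s) * (((n+1:ℕ):ℝ)^(1/t))^(-s) :=
      Real.mul_rpow (by norm_num) (by positivity)
    have h3 : (((n+1:ℕ):ℝ)^(1/t))^(-s) = ((n+1:ℕ):ℝ)^((1/t)*(-s)) :=
      (Real.rpow_mul (by positivity) _ _).symm
    have h4 : ((n+1:ℕ):ℝ)^(-1:ℝ) ≤ ((n+1:ℕ):ℝ)^((1/t)*(-s)) := by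
      apply Real.rpow_le_rpow_of_exponent_le
      · exact_mod_cast Nat.one_le_iff_ne_zero.2 (by omega)
      · have hd : s / t ≤ 1 := (div_le_one ht).2 hst
        have heq : (1/t) * (-s) = -(s/t) := by ring
        rw [heq]; linarith
    have h5 : (7:ℝ)^(-s) * ((n+1:ℕ):ℝ)^(-1:ℝ)
        ≤ (7:ℝ)^(-s) * ((n+1:ℕ):ℝ)^((1/t)*(-s)) := by
      apply mul_le_mul_of_nonneg_left h4 (Real.rpow_nonneg (by norm_num) _)
    calc (7:ℝ)^(-s) * ((n+1:ℕ):ℝ)^(-1:ℝ)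
        ≤ (7:ℝ)^(-s) * ((n+1:ℕ):ℝ)^((1/t)*(-s)) := h5
      _ = (7 * ((n+1:ℕ):ℝ)^(1/t)) ^ (-s) := by rw [h2, h3]
      _ ≤ _ := h1
  · intro hsumg
    have h7 : (7:ℝ)^(-s) ≠ 0 := (Real.rpow_pos_of_pos (by norm_num) _).ne'
    have h := (summable_mul_left_iff h7).1 hsumg
    exact not_summable_shift (-1) le_rfl h

include ht in
lemma tpos_lam (ω : ℕ → Bool) :
    sInf (ENNReal.ofReal ''
      {s : ℝ | 0 ≤ s ∧ Summable fun n : ℕ => ((bfam (abase t) ω n : ℝ)) ^ (-s)})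
    = ENNReal.ofReal t := by
  rw [sum_set_eq_Ioi ht.le (tpos_up ht ω) (tpos_down ht ω), sInf_ofReal_Ioi ht.le]

end TPos

/-! ### case t = 0 -/

def azero : ℕ → ℕ := fun n => 2 ^ (n+1)

lemma azero_base : Base azero := by
  refine ⟨fun n => Nat.one_le_two_pow, fun m n h => Nat.pow_le_pow_right (by omega) (by omega),
    fun N => ⟨N, ?_⟩⟩
  calc N ≤ 2 ^ N := (Nat.lt_two_pow_self (n := N)) |>.le
    _ ≤ 2 ^ (N+1) := Nat.pow_le_pow_right (by omega) (by omega)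

lemma czero_lb (ω : ℕ → Bool) (n : ℕ) : (2:ℝ) ^ (n:ℕ) ≤ ((bfam azero ω n : ℝ)) := by
  have h1 := (bfam_bounds (a := azero) ω n).1
  have h2 : 2 ^ n ≤ 3 * azero n := by
    rw [azero]; have : 2^n ≤ 2^(n+1) := Nat.pow_le_pow_right (by omega) (by omega); omega
  have : (2:ℕ) ^ n ≤ bfam azero ω n := by omega
  exact_mod_cast this

lemma czero_pos (ω : ℕ → Bool) (n : ℕ) : (0:ℝ) < ((bfam azero ω n : ℝ)) :=
  lt_of_lt_of_le (by positivity) (czero_lb ω n)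

lemma tzero_up (ω : ℕ → Bool) (s : ℝ) (hs : 0 < s) :
    Summable fun n : ℕ => ((bfam azero ω n : ℝ)) ^ (-s) := by
  have hr : (0:ℝ) ≤ (2:ℝ)^(-s) := Real.rpow_nonneg (by norm_num) _
  have hr1 : (2:ℝ)^(-s) < 1 := by
    rw [Real.rpow_lt_one_iff (by norm_num)]
    right; left; constructor <;> [norm_num; linarith]
  have hgeom : Summable fun n : ℕ => ((2:ℝ)^(-s)) ^ n := summable_geometric_of_lt_one hr hr1
  apply Summable.of_nonneg_of_le
    (fun n => (Real.rpow_pos_of_pos (czero_pos ω n) _).le) (fun n => ?_) hgeom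
  calc ((bfam azero ω n : ℝ)) ^ (-s) ≤ ((2:ℝ) ^ (n:ℕ)) ^ (-s) :=
        rpow_neg_anti (by positivity) (czero_lb ω n) hs.le
    _ = ((2:ℝ)^(-s)) ^ n := by
        rw [← Real.rpow_natCast ((2:ℝ)^(-s)) n, ← Real.rpow_natCast (2:ℝ) n,
          ← Real.rpow_mul (by norm_num), ← Real.rpow_mul (by norm_num), mul_comm]

lemma tzero_down (ω : ℕ → Bool) (s : ℝ) (hs0 : 0 ≤ s) (hst : s ≤ 0) :
    ¬ Summable fun n : ℕ => ((bfam azero ω n : ℝ)) ^ (-s) := by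
  have : s = 0 := le_antisymm hst hs0
  subst this
  intro h
  have := h.congr (fun n => by rw [neg_zero, Real.rpow_zero] : ∀ n,
    ((bfam azero ω n : ℝ)) ^ (-(0:ℝ)) = 1)
  rw [summable_const_iff] at this
  norm_num at this

lemma tzero_lam (ω : ℕ → Bool) :
    sInf (ENNReal.ofReal ''
      {s : ℝ | 0 ≤ s ∧ Summable fun n : ℕ => ((bfam azero ω n : ℝ)) ^ (-s)})
    = ENNReal.ofReal 0 := by
  rw [sum_set_eq_Ioi le_rfl (fun s hs => tzero_up ω s hs) (tzero_down ω), sInf_ofReal_Ioi le_rfl]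

/-! ### case t = ∞ -/

def ainf : ℕ → ℕ := fun n => 2 + Nat.log 2 n

lemma ainf_base : Base ainf := by
  refine ⟨fun n => by simp only [ainf]; omega, fun m n h => by simp only [ainf]; have := Nat.log_mono_right (b := 2) h; omega,
    fun N => ⟨2 ^ N, ?_⟩⟩
  simp only [ainf, Nat.log_pow (by omega : 1 < 2)]
  omega

lemma cinf_ub (ω : ℕ → Bool) (n : ℕ) (hn : 1 ≤ n) :
    ((bfam ainf ω n : ℝ)) ≤ 7 + 6 * Real.log n := by
  have h1 := (bfam_bounds (a := ainf) ω n).2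
  have h2 : (bfam ainf ω n : ℝ) ≤ 7 + 3 * (Nat.log 2 n : ℝ) := by
    have : bfam ainf ω n ≤ 7 + 3 * Nat.log 2 n := by simp only [ainf] at h1 ⊢; omega
    exact_mod_cast this
  have h3 : (Nat.log 2 n : ℝ) * Real.log 2 ≤ Real.log n := by
    have hpow : ((2:ℝ) ^ (Nat.log 2 n)) ≤ (n:ℝ) := by
      exact_mod_cast Nat.pow_log_le_self 2 (by omega)
    have hlt : ((0:ℝ)) < 2 ^ (Nat.log 2 n) := by positivity
    have := Real.log_le_log hlt hpow
    rwa [Real.log_pow] at this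
  have hl2 : (0.6931471803 : ℝ) < Real.log 2 := Real.log_two_gt_d9
  have h4 : (Nat.log 2 n : ℝ) ≤ 2 * Real.log n := by
    nlinarith [(by positivity : (0:ℝ) ≤ (Nat.log 2 n : ℝ)), Real.log_nonneg (by exact_mod_cast hn : (1:ℝ) ≤ n)]
  linarith

lemma cinf_pos (ω : ℕ → Bool) (n : ℕ) : (0:ℝ) < ((bfam ainf ω n : ℝ)) := by
  have := (bfam_bounds (a := ainf) ω n).1
  have h : 1 ≤ bfam ainf ω n := by simp only [ainf] at this ⊢; omega
  exact_mod_cast Nat.lt_of_lt_of_le Nat.zero_lt_one h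

lemma tinf_down (ω : ℕ → Bool) (s : ℝ) (hs0 : 0 ≤ s) :
    ¬ Summable fun n : ℕ => ((bfam ainf ω n : ℝ)) ^ (-s) := by
  rcases eq_or_lt_of_le hs0 with rfl | hs
  · intro h
    have := h.congr (fun n => by rw [neg_zero, Real.rpow_zero] : ∀ n,
      ((bfam ainf ω n : ℝ)) ^ (-(0:ℝ)) = 1)
    rw [summable_const_iff] at this
    norm_num at this
  · set δ : ℝ := 1/(2*s) with hδ
    have hδ0 : 0 < δ := by positivity
    apply not_summable_of_eventually_ge (g := fun n : ℕ => ((n:ℕ):ℝ) ^ (-(2:ℝ)⁻¹))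
    · intro n; exact Real.rpow_nonneg (by positivity) _
    · -- eventually (bfam n) ≤ n^δ hence n^{-1/2} ≤ bfam^{-s}
      have hlog : ∀ᶠ x : ℝ in Filter.atTop, |Real.log x| ≤ (1/12) * |x ^ δ| :=
        (isLittleO_log_rpow_atTop hδ0).def (by norm_num)
      have hbig : ∀ᶠ x : ℝ in Filter.atTop, (14:ℝ) ≤ x ^ δ :=
        (tendsto_rpow_atTop hδ0).eventually_ge_atTop 14
      have hcomb : ∀ᶠ x : ℝ in Filter.atTop, 7 + 6 * Real.log x ≤ x ^ δ := by
        filter_upwards [hlog, hbig, Filter.eventually_ge_atTop (1:ℝ)] with x h1 h2 h3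
        have hx : 0 ≤ x ^ δ := by linarith
        rw [abs_of_nonneg hx] at h1
        have : Real.log x ≤ (1/12) * (x ^ δ) := le_trans (le_abs_self _) h1
        nlinarith
      have hnat : ∀ᶠ n : ℕ in Filter.atTop, 7 + 6 * Real.log n ≤ ((n:ℕ):ℝ) ^ δ :=
        tendsto_natCast_atTop_atTop.eventually hcomb
      filter_upwards [hnat, Filter.eventually_ge_atTop 1] with n h1 h2
      have hub := cinf_ub ω n h2
      have hle : ((bfam ainf ω n : ℝ)) ≤ ((n:ℕ):ℝ) ^ δ := by linarith
      have := rpow_neg_anti (cinf_pos ω n) hle hs0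
      calc ((n:ℕ):ℝ) ^ (-(2:ℝ)⁻¹) = (((n:ℕ):ℝ) ^ δ) ^ (-s) := by
            rw [← Real.rpow_mul (by positivity)]
            congr 1
            have hhs : s ≠ 0 := hs.ne'
            rw [hδ]
            field_simp
        _ ≤ ((bfam ainf ω n : ℝ)) ^ (-s) := this
    · rw [Real.summable_nat_rpow]
      norm_num

lemma tinf_lam (ω : ℕ → Bool) :
    sInf (ENNReal.ofReal ''
      {s : ℝ | 0 ≤ s ∧ Summable fun n : ℕ => ((bfam ainf ω n : ℝ)) ^ (-s)})
    = ⊤ := by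
  have hempty : {s : ℝ | 0 ≤ s ∧ Summable fun n : ℕ => ((bfam ainf ω n : ℝ)) ^ (-s)} = ∅ := by
    ext s
    simp only [Set.mem_setOf_eq, Set.mem_empty_iff_false, iff_false, not_and]
    exact fun hs => tinf_down ω s hs
  rw [hempty, Set.image_empty, sInf_empty]

end EngelAux

open EngelAux

/-- For every `α ∈ [0,∞]`, the level set `{x ∈ (0,1) : λ(x) = α}` is
uncountable. -/
theorem engelLambda_level_set_uncountable (α : ℝ≥0∞) :
    ¬ Set.Countable {x : ℝ | x ∈ Set.Ioo (0 : ℝ) 1 ∧ engelLambda x = α} := by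
  rcases eq_or_ne α ⊤ with rfl | hα
  · exact level_uncountable ainf_base ⊤ (fun ω => tinf_lam ω)
  · rcases eq_or_ne α 0 with rfl | h0
    · exact level_uncountable azero_base 0
        (fun ω => by rw [tzero_lam ω, ENNReal.ofReal_zero])
    · have ht : 0 < α.toReal := ENNReal.toReal_pos h0 hα
      exact level_uncountable (abase_base ht) α
        (fun ω => by rw [tpos_lam ht ω, ENNReal.ofReal_toReal hα])
end

section
/- For every α ∈ [0,∞], the level set {x ∈ (0,1) : λ(x) = α} is dense in (0,1). -/
open Filter MeasureTheory Set
open scoped ENNReal NNReal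

set_option linter.unusedVariables false
set_option linter.unusedTactic false

namespace EngelAux


noncomputable def pInv (d : ℕ → ℕ) (n k : ℕ) : ℝ :=
  ∏ j ∈ Finset.range (k + 1), ((d (n + j) : ℝ))⁻¹

noncomputable def xval (d : ℕ → ℕ) (n : ℕ) : ℝ := ∑' k, pInv d n k

section XvalSection
variable {d : ℕ → ℕ} (hm : Monotone d) (h2 : 2 ≤ d 0)
include hm h2

lemma two_le (j : ℕ) : 2 ≤ d j := h2.trans (hm (Nat.zero_le j))

lemma dpos (j : ℕ) : (0:ℝ) < (d j : ℝ) := by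
  have := two_le hm h2 j; positivity

lemma pInv_pos (n k : ℕ) : 0 < pInv d n k := by
  apply Finset.prod_pos
  intro j _
  exact inv_pos.2 (dpos hm h2 _)

lemma prod_le_aux (n m : ℕ) :
    ∏ j ∈ Finset.range m, ((d (n + j) : ℝ))⁻¹ ≤ ((d n : ℝ))⁻¹ ^ m := by
  calc ∏ j ∈ Finset.range m, ((d (n + j) : ℝ))⁻¹
      ≤ ∏ _j ∈ Finset.range m, ((d n : ℝ))⁻¹ := by
        apply Finset.prod_le_prod
        · intro j _; positivity
        · intro j _
          exact inv_anti₀ (dpos hm h2 n) (by exact_mod_cast hm (Nat.le_add_right n j))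
    _ = ((d n : ℝ))⁻¹ ^ m := by simp

lemma pInv_le (n k : ℕ) : pInv d n k ≤ ((d n : ℝ))⁻¹ ^ (k + 1) :=
  prod_le_aux hm h2 n (k + 1)

lemma summable_pInv (n : ℕ) : Summable (pInv d n) := by
  have hr : (0:ℝ) ≤ ((d n : ℝ))⁻¹ := by positivity
  have hr1 : ((d n : ℝ))⁻¹ < 1 := by
    rw [inv_lt_one_iff₀]
    right
    exact_mod_cast lt_of_lt_of_le one_lt_two (two_le hm h2 n)
  apply Summable.of_nonneg_of_le (fun k => (pInv_pos hm h2 n k).le) (pInv_le hm h2 n)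
  exact ((summable_geometric_of_lt_one hr hr1).mul_left ((d n : ℝ))⁻¹).congr
    (fun k => (pow_succ' _ _).symm)

lemma xval_gt (n : ℕ) : ((d n : ℝ))⁻¹ < xval d n := by
  have h0 : pInv d n 0 = ((d n : ℝ))⁻¹ := by simp [pInv]
  have : pInv d n 0 + pInv d n 1 ≤ xval d n := by
    have := Summable.sum_le_tsum (Finset.range 2) (fun k _ => (pInv_pos hm h2 n k).le)
      (summable_pInv hm h2 n)
    simpa [Finset.sum_range_succ, xval] using this
  nlinarith [pInv_pos hm h2 n 1]

lemma xval_pos (n : ℕ) : 0 < xval d n :=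
  lt_trans (inv_pos.2 (dpos hm h2 n)) (xval_gt hm h2 n)

lemma xval_rec (n : ℕ) : xval d n = ((d n : ℝ))⁻¹ * (1 + xval d (n + 1)) := by
  have hs := summable_pInv hm h2 (n := n)
  rw [xval, Summable.tsum_eq_zero_add hs]
  have h0 : pInv d n 0 = ((d n : ℝ))⁻¹ := by simp [pInv]
  have hsucc : ∀ k, pInv d n (k + 1) = pInv d (n + 1) k * ((d n : ℝ))⁻¹ := by
    intro k
    rw [pInv, Finset.prod_range_succ', pInv]
    rw [show n + 0 = n from rfl]
    congr 1
    exact Finset.prod_congr rfl fun j _ => by rw [show n + (j + 1) = n + 1 + j by omega]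
  rw [h0]
  rw [tsum_congr hsucc, tsum_mul_right]
  rw [xval]
  ring


variable (hub : ∀ n, ∃ m, d n < d (n + m))
include hub

lemma xval_lt (n : ℕ) : xval d n < ((d n : ℝ) - 1)⁻¹ := by
  obtain ⟨m, hdm⟩ := hub n
  set r : ℝ := ((d n : ℝ))⁻¹ with hrdef
  have hDpos : (0:ℝ) < (d n : ℝ) := dpos hm h2 n
  have hD2 : (2:ℝ) ≤ (d n : ℝ) := by exact_mod_cast two_le hm h2 n
  have hr : (0:ℝ) ≤ r := by positivity
  have hr1 : r < 1 := by
    rw [hrdef, inv_lt_one_iff₀]; right; linarith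
  have hsumg : Summable (fun k : ℕ => r ^ (k + 1)) :=
    ((summable_geometric_of_lt_one hr hr1).mul_left r).congr
      (fun k => (pow_succ' _ _).symm)
  have hstrict : pInv d n m < r ^ (m + 1) := by
    have h1 : ∏ j ∈ Finset.range m, ((d (n + j) : ℝ))⁻¹ ≤ r ^ m := prod_le_aux hm h2 n m
    have h2' : ((d (n + m) : ℝ))⁻¹ < r := by
      rw [hrdef]
      exact inv_strictAnti₀ hDpos (by exact_mod_cast hdm)
    have hppos : (0:ℝ) < ∏ j ∈ Finset.range m, ((d (n + j) : ℝ))⁻¹ := by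
      apply Finset.prod_pos; intro j _; exact inv_pos.2 (dpos hm h2 _)
    calc pInv d n m = (∏ j ∈ Finset.range m, ((d (n + j) : ℝ))⁻¹) * ((d (n + m) : ℝ))⁻¹ := by
          rw [pInv, Finset.prod_range_succ]
      _ < r ^ m * r := by
          apply mul_lt_mul' h1 h2' (by positivity) (by positivity)
      _ = r ^ (m + 1) := (pow_succ _ _).symm
  have hlt : xval d n < ∑' k, r ^ (k + 1) :=
    Summable.tsum_lt_tsum_of_nonneg (fun k => (pInv_pos hm h2 n k).le) (pInv_le hm h2 n) hstrict hsumg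
  have : ∑' k : ℕ, r ^ (k + 1) = ((d n : ℝ) - 1)⁻¹ := by
    have : ∑' k : ℕ, r ^ (k + 1) = r * (1 - r)⁻¹ := by
      rw [← tsum_geometric_of_lt_one hr hr1, ← tsum_mul_left]
      exact tsum_congr fun k => pow_succ' _ _
    rw [this, hrdef]
    rw [eq_comm, inv_eq_iff_eq_inv, eq_comm]
    field_simp
  linarith [this ▸ hlt]


lemma xval_lt_one (n : ℕ) : xval d n < 1 := by
  have h1 := xval_lt hm h2 hub n
  have hD2 : (2:ℝ) ≤ (d n : ℝ) := by exact_mod_cast two_le hm h2 n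
  have : ((d n : ℝ) - 1)⁻¹ ≤ 1 := by
    rw [inv_le_one_iff₀]; right; linarith
  linarith

lemma ceil_inv_xval (n : ℕ) : ⌈(xval d n)⁻¹⌉ = (d n : ℤ) := by
  have hxpos := xval_pos hm h2 n
  have hgt := xval_gt hm h2 n
  have hlt := xval_lt hm h2 hub n
  have hD2 : (2:ℝ) ≤ (d n : ℝ) := by exact_mod_cast two_le hm h2 n
  have hinvpos : (0:ℝ) < ((d n : ℝ))⁻¹ := by positivity
  have hub1 : (xval d n)⁻¹ < (d n : ℝ) := by
    have := inv_strictAnti₀ hinvpos hgt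
    rwa [inv_inv] at this
  have hlb : (d n : ℝ) - 1 < (xval d n)⁻¹ := by
    have hpos : (0:ℝ) < xval d n := hxpos
    have h1 : (0:ℝ) < (d n : ℝ) - 1 := by linarith
    have := inv_strictAnti₀ hpos hlt
    rwa [inv_inv] at this
  rw [Int.ceil_eq_iff]
  constructor
  · push_cast; linarith
  · push_cast; linarith

lemma natCeil_inv_xval (n : ℕ) : ⌈(xval d n)⁻¹⌉₊ = d n := by
  have h := ceil_inv_xval hm h2 hub n
  have h0 : (0:ℝ) ≤ (xval d n)⁻¹ := (inv_pos.2 (xval_pos hm h2 n)).le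
  have h1 : (⌈(xval d n)⁻¹⌉₊ : ℤ) = (d n : ℤ) := by
    rw [Int.natCast_ceil_eq_ceil h0, h]
  exact_mod_cast h1

lemma engelT_xval (n : ℕ) : engelT (xval d n) = xval d (n + 1) := by
  have hxne : xval d n ≠ 0 := (xval_pos hm h2 n).ne'
  have hD : ((d n : ℝ)) ≠ 0 := (dpos hm h2 n).ne'
  rw [engelT, if_neg hxne, ceil_inv_xval hm h2 hub n]
  rw [xval_rec hm h2 n]
  push_cast
  field_simp
  ring

lemma iterate_xval (m : ℕ) : engelT^[m] (xval d 0) = xval d m := by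
  induction m with
  | zero => rfl
  | succ k ih => rw [Function.iterate_succ_apply', ih, engelT_xval hm h2 hub]

lemma digit_xval (m : ℕ) : engelDigit (m + 1) (xval d 0) = d m := by
  rw [engelDigit]
  simp only [Nat.add_sub_cancel]
  rw [iterate_xval hm h2 hub m]
  exact natCeil_inv_xval hm h2 hub m

lemma lambda_xval : engelLambda (xval d 0) =
    sInf (ENNReal.ofReal '' {s : ℝ | 0 ≤ s ∧ Summable fun k : ℕ => ((d k : ℝ)) ^ (-s)}) := by
  rw [engelLambda]
  have hset : {s : ℝ | 0 ≤ s ∧ Summable fun n : ℕ =>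
      ((engelDigit (n + 1) (xval d 0) : ℝ)) ^ (-s)} =
      {s : ℝ | 0 ≤ s ∧ Summable fun k : ℕ => ((d k : ℝ)) ^ (-s)} := by
    ext t
    simp only [Set.mem_setOf_eq]
    constructor <;> rintro ⟨ht, hsum⟩ <;>
      exact ⟨ht, hsum.congr fun k => by rw [digit_xval hm h2 hub k]⟩
  rw [hset]



end XvalSection

lemma rec_expand (c : ℕ → ℕ) (f : ℕ → ℝ) (n : ℕ)
    (hf : ∀ k < n, f k = ((c k : ℝ))⁻¹ * (1 + f (k + 1))) :
    f 0 = (∑ k ∈ Finset.range n, ∏ j ∈ Finset.range (k + 1), ((c j : ℝ))⁻¹)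
      + (∏ j ∈ Finset.range n, ((c j : ℝ))⁻¹) * f n := by
  induction n with
  | zero => simp
  | succ m ih =>
    rw [ih (fun k hk => hf k (hk.trans (Nat.lt_succ_self m))), hf m (Nat.lt_succ_self m),
      Finset.sum_range_succ, Finset.prod_range_succ]
    ring

lemma engelT_forward {y : ℝ} (hy : y ∈ Set.Ioo (0:ℝ) 1) (hirr : Irrational y) :
    engelT y ∈ Set.Ioo (0:ℝ) 1 ∧ Irrational (engelT y) ∧ engelT y < y := by
  obtain ⟨hy0, hy1⟩ := hy
  have hyne : y ≠ 0 := hy0.ne'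
  have hinv : 1 < y⁻¹ := (one_lt_inv_iff₀).2 ⟨hy0, hy1⟩
  set c : ℤ := ⌈y⁻¹⌉ with hc
  have hle : (y⁻¹ : ℝ) ≤ (c : ℝ) := Int.le_ceil _
  have hne : (y⁻¹ : ℝ) ≠ (c : ℝ) := (hirr.inv.ne_int c)
  have hlt' : (y⁻¹ : ℝ) < (c : ℝ) := lt_of_le_of_ne hle hne
  have hcu : (c : ℝ) < y⁻¹ + 1 := Int.ceil_lt_add_one _
  have hT : engelT y = y * (c : ℝ) - 1 := by rw [engelT, if_neg hyne]
  have h1 : (1 : ℝ) < y * (c : ℝ) := by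
    calc (1:ℝ) = y * y⁻¹ := (mul_inv_cancel₀ hyne).symm
      _ < y * (c : ℝ) := by exact mul_lt_mul_of_pos_left hlt' hy0
  have h2 : y * (c : ℝ) < 1 + y := by
    calc y * (c : ℝ) < y * (y⁻¹ + 1) := mul_lt_mul_of_pos_left hcu hy0
      _ = 1 + y := by field_simp
  have hcne : c ≠ 0 := by
    have : (1:ℝ) < (c:ℝ) := lt_trans hinv hlt'
    exact_mod_cast (by intro h; rw [h] at this; norm_num at this : ¬ c = 0)
  refine ⟨⟨by rw [hT]; linarith, by rw [hT]; linarith⟩, ?_, by rw [hT]; linarith⟩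
  rw [hT]
  exact_mod_cast (hirr.mul_intCast hcne).sub_intCast 1

lemma iterate_forward {y : ℝ} (hy : y ∈ Set.Ioo (0:ℝ) 1) (hirr : Irrational y) (m : ℕ) :
    engelT^[m] y ∈ Set.Ioo (0:ℝ) 1 ∧ Irrational (engelT^[m] y) := by
  induction m with
  | zero => exact ⟨hy, hirr⟩
  | succ k ih =>
    rw [Function.iterate_succ_apply']
    exact ⟨(engelT_forward ih.1 ih.2).1, (engelT_forward ih.1 ih.2).2.1⟩

lemma digit_two_le {y : ℝ} (hy : y ∈ Set.Ioo (0:ℝ) 1) (hirr : Irrational y) (m : ℕ) :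
    2 ≤ engelDigit (m + 1) y := by
  obtain ⟨hz0, hz1⟩ := (iterate_forward hy hirr m).1
  have hinv : (1:ℝ) < (engelT^[m] y)⁻¹ := (one_lt_inv_iff₀).2 ⟨hz0, hz1⟩
  rw [engelDigit, Nat.add_sub_cancel]
  have := Nat.lt_ceil.2 (by exact_mod_cast hinv : ((1:ℕ):ℝ) < (engelT^[m] y)⁻¹)
  omega

lemma digit_rec {y : ℝ} (hy : y ∈ Set.Ioo (0:ℝ) 1) (hirr : Irrational y) (k : ℕ) :
    engelT^[k] y =
      ((engelDigit (k + 1) y : ℝ))⁻¹ * (1 + engelT^[k + 1] y) := by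
  obtain ⟨hz0, hz1⟩ := (iterate_forward hy hirr k).1
  have hzne : engelT^[k] y ≠ 0 := hz0.ne'
  have hcast : ((engelDigit (k + 1) y : ℕ) : ℝ) = ((⌈(engelT^[k] y)⁻¹⌉ : ℤ) : ℝ) := by
    rw [engelDigit, Nat.add_sub_cancel]
    exact natCast_ceil_eq_intCast_ceil (by positivity)
  have hne2 : ((engelDigit (k + 1) y : ℕ) : ℝ) ≠ 0 := by
    have := digit_two_le hy hirr k
    positivity
  have hT : engelT^[k + 1] y = engelT^[k] y * ((engelDigit (k + 1) y : ℕ) : ℝ) - 1 := by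
    rw [Function.iterate_succ_apply', engelT, if_neg hzne, hcast]
  rw [hT]
  field_simp
  ring

lemma digit_mono {y : ℝ} (hy : y ∈ Set.Ioo (0:ℝ) 1) (hirr : Irrational y) :
    Monotone (fun k => engelDigit (k + 1) y) := by
  apply monotone_nat_of_le_succ
  intro k
  have h1 := (iterate_forward hy hirr k).1
  have h2 := (iterate_forward hy hirr (k + 1)).1
  have hlt : engelT^[k + 1] y < engelT^[k] y := by
    rw [Function.iterate_succ_apply']
    exact (engelT_forward h1 (iterate_forward hy hirr k).2).2.2
  have hinv : (engelT^[k] y)⁻¹ ≤ (engelT^[k + 1] y)⁻¹ :=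
    (inv_anti₀ h2.1 hlt.le)
  simp only [engelDigit, Nat.add_sub_cancel]
  exact Nat.ceil_mono hinv



def Eset (q : ℕ → ℕ) : Set ℝ := {s : ℝ | 0 ≤ s ∧ Summable fun k : ℕ => ((q k : ℝ)) ^ (-s)}

lemma sInf_ofReal_eq {E : Set ℝ} {t : ℝ} (h1 : ∀ s ∈ E, t ≤ s)
    (h2 : ∀ ε : ℝ, 0 < ε → t + ε ∈ E) :
    sInf (ENNReal.ofReal '' E) = ENNReal.ofReal t := by
  apply le_antisymm
  · have key : ∀ j : ℕ, sInf (ENNReal.ofReal '' E) ≤ ENNReal.ofReal (t + 1 / (j + 1)) :=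
      fun j => sInf_le ⟨t + 1 / (j + 1), h2 _ (by positivity), rfl⟩
    have hten : Tendsto (fun j : ℕ => ENNReal.ofReal (t + 1 / (j + 1))) atTop
        (nhds (ENNReal.ofReal t)) := by
      have h0 : Tendsto (fun j : ℕ => t + 1 / ((j : ℝ) + 1)) atTop (nhds (t + 0)) :=
        tendsto_const_nhds.add tendsto_one_div_add_atTop_nhds_zero_nat
    -- continuity of ofReal
      rw [add_zero] at h0
      exact (ENNReal.continuous_ofReal.tendsto t).comp h0
    exact ge_of_tendsto' hten key
  · exact le_sInf (by rintro _ ⟨s, hs, rfl⟩; exact ENNReal.ofReal_le_ofReal (h1 s hs))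

lemma not_summable_of_eventually_ge_s8 {f : ℕ → ℝ} (h0 : ∀ k, 0 ≤ f k)
    (h : ∀ᶠ k : ℕ in atTop, ((k : ℝ) + 1)⁻¹ ≤ f k) : ¬ Summable f := by
  intro hf
  obtain ⟨N, hN⟩ := eventually_atTop.1 h
  have h1 : Summable (fun k : ℕ => f (k + N)) := (summable_nat_add_iff N).2 hf
  have h2 : Summable (fun k : ℕ => (((k + N : ℕ) : ℝ) + 1)⁻¹) :=
    Summable.of_nonneg_of_le (fun k => by positivity)
      (fun k => hN _ (Nat.le_add_left N k)) h1
  have h3 : Summable (fun k : ℕ => ((k + (N + 1) : ℕ) : ℝ)⁻¹) :=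
    h2.congr (fun k => by push_cast; ring_nf)
  exact Real.not_summable_natCast_inv ((summable_nat_add_iff (N + 1)).1 h3)

lemma qpos {M : ℕ} (hM : 2 ≤ M) (g : ℕ → ℕ) (k : ℕ) : (0:ℝ) < ((M + g k : ℕ) : ℝ) := by
  have : 0 < M + g k := by omega
  exact_mod_cast this

/-- the `α = ∞` tail -/
lemma Eset_log {M : ℕ} (hM : 2 ≤ M) :
    Eset (fun k => M + Nat.log 2 (k + 1)) = ∅ := by
  ext s
  simp only [Eset, mem_setOf_eq, mem_empty_iff_false, iff_false, not_and]
  intro hs hsum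
  set q : ℕ → ℕ := fun k => M + Nat.log 2 (k + 1) with hq
  rcases eq_or_lt_of_le hs with hs0 | hs0
  · have : Summable (fun _ : ℕ => (1:ℝ)) := hsum.congr (fun k => by
      rw [← hs0, neg_zero, Real.rpow_zero])
    have h10 : (1:ℝ) = 0 := by
      have := this.tendsto_atTop_zero
      exact tendsto_nhds_unique tendsto_const_nhds this
    norm_num at h10
  · -- s > 0
    refine not_summable_of_eventually_ge_s8 (fun k => Real.rpow_nonneg (by positivity) _) ?_ hsum
    -- q k ≤ (M+2) * (1 + log (k+1))
    have hqle : ∀ k : ℕ, ((q k : ℕ) : ℝ) ≤ ((M : ℝ) + 2) * (1 + Real.log ((k : ℝ) + 1)) := by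
      intro k
      have hlog0 : 0 ≤ Real.log ((k : ℝ) + 1) := Real.log_nonneg (by push_cast; linarith)
      have hnat : (Nat.log 2 (k + 1) : ℝ) ≤ 2 * Real.log ((k : ℝ) + 1) := by
        have hp : (2:ℕ) ^ Nat.log 2 (k + 1) ≤ k + 1 := Nat.pow_log_le_self 2 (Nat.succ_ne_zero k)
        have hp' : (2:ℝ) ^ (Nat.log 2 (k + 1)) ≤ (k : ℝ) + 1 := by
          have h' : ((2 ^ Nat.log 2 (k + 1) : ℕ) : ℝ) ≤ ((k + 1 : ℕ) : ℝ) := Nat.cast_le.2 hp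
          push_cast at h'
          linarith
        have hlogle : Real.log ((2:ℝ) ^ (Nat.log 2 (k + 1))) ≤ Real.log ((k : ℝ) + 1) :=
          Real.log_le_log (by positivity) hp'
        rw [Real.log_pow] at hlogle
        have hl2 : (0.6931471803 : ℝ) < Real.log 2 := Real.log_two_gt_d9
        have hln : (0:ℝ) ≤ (Nat.log 2 (k + 1) : ℝ) := Nat.cast_nonneg _
        nlinarith [hlogle, hl2, hln]
      show ((M + Nat.log 2 (k + 1) : ℕ) : ℝ) ≤ _
      push_cast
      nlinarith [hlog0, hnat]
    set C : ℝ := 2 * ((M : ℝ) + 2) with hC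
    have hCpos : 0 < C := by positivity
    -- eventual estimate in real variable
    have hev : ∀ᶠ y : ℝ in atTop, (((M : ℝ) + 2) * (1 + Real.log y)) ^ s ≤ y := by
      have E1 : ∀ᶠ y : ℝ in atTop, 1 ≤ Real.log y :=
        Real.tendsto_log_atTop.eventually_ge_atTop 1
      have E2 : ∀ᶠ y : ℝ in atTop, Real.log y ^ s ≤ y ^ (1/2 : ℝ) := by
        have hlo := (isLittleO_log_rpow_rpow_atTop s (by norm_num : (0:ℝ) < 1/2)).bound
          one_pos
        filter_upwards [hlo, Real.tendsto_log_atTop.eventually_ge_atTop 0,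
          eventually_ge_atTop (0:ℝ)] with y hy hly hy0
        rw [one_mul] at hy
        calc Real.log y ^ s ≤ |Real.log y ^ s| := le_abs_self _
          _ ≤ |y ^ (1/2 : ℝ)| := by simpa [Real.norm_eq_abs] using hy
          _ = y ^ (1/2 : ℝ) := abs_of_nonneg (Real.rpow_nonneg hy0 _)
      have E3 : ∀ᶠ y : ℝ in atTop, C ^ s ≤ y ^ (1/2 : ℝ) :=
        (tendsto_rpow_atTop (by norm_num : (0:ℝ) < 1/2)).eventually_ge_atTop _
      filter_upwards [E1, E2, E3, eventually_gt_atTop (0:ℝ)] with y h1 h2 h3 h4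
      have hcl : ((M : ℝ) + 2) * (1 + Real.log y) ≤ C * Real.log y := by
        rw [hC]; nlinarith
      calc (((M : ℝ) + 2) * (1 + Real.log y)) ^ s ≤ (C * Real.log y) ^ s :=
            Real.rpow_le_rpow (by nlinarith) hcl hs
        _ = C ^ s * Real.log y ^ s := Real.mul_rpow hCpos.le (by linarith)
        _ ≤ (y ^ (1/2:ℝ)) * (y ^ (1/2:ℝ)) := by
            apply mul_le_mul h3 h2 (Real.rpow_nonneg (by linarith) s)
              (Real.rpow_nonneg h4.le _)
        _ = y := by
            rw [← Real.rpow_add h4]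
            norm_num
    have hcomp : Tendsto (fun k : ℕ => (k : ℝ) + 1) atTop atTop :=
      tendsto_atTop_add_const_right _ _ tendsto_natCast_atTop_atTop
    filter_upwards [hcomp.eventually hev] with k hk
    have hql : ((q k : ℕ) : ℝ) ^ s ≤ (k : ℝ) + 1 :=
      le_trans (Real.rpow_le_rpow (by positivity) (hqle k) hs) hk
    have hqpos : (0:ℝ) < ((q k : ℕ) : ℝ) := by
      have : 0 < q k := by simp [hq]; omega
      exact_mod_cast this
    rw [Real.rpow_neg hqpos.le]
    exact inv_anti₀ (Real.rpow_pos_of_pos hqpos s) hql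


namespace Tails

/-- `α = t ∈ (0,∞)` tail -/
lemma sInf_Eset_rpow {M : ℕ} (hM : 2 ≤ M) {t : ℝ} (ht : 0 < t) :
    sInf (ENNReal.ofReal '' Eset (fun k => M + ⌈((k : ℝ) + 1) ^ t⁻¹⌉₊)) =
      ENNReal.ofReal t := by
  set q : ℕ → ℕ := fun k => M + ⌈((k : ℝ) + 1) ^ t⁻¹⌉₊ with hq
  have ha1 : ∀ k : ℕ, (1:ℝ) ≤ ((k : ℝ) + 1) ^ t⁻¹ := by
    intro k
    calc (1:ℝ) = (1:ℝ) ^ t⁻¹ := (Real.one_rpow _).symm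
      _ ≤ ((k : ℝ) + 1) ^ t⁻¹ :=
        Real.rpow_le_rpow zero_le_one (by linarith [Nat.cast_nonneg (α := ℝ) k])
          (inv_nonneg.2 ht.le)
  have hapos : ∀ k : ℕ, (0:ℝ) < ((k : ℝ) + 1) ^ t⁻¹ :=
    fun k => lt_of_lt_of_le zero_lt_one (ha1 k)
  have haq : ∀ k : ℕ, ((k : ℝ) + 1) ^ t⁻¹ ≤ ((q k : ℕ) : ℝ) := by
    intro k
    calc ((k : ℝ) + 1) ^ t⁻¹ ≤ (⌈((k : ℝ) + 1) ^ t⁻¹⌉₊ : ℝ) := Nat.le_ceil _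
      _ ≤ ((q k : ℕ) : ℝ) := by
          have : (⌈((k : ℝ) + 1) ^ t⁻¹⌉₊ : ℕ) ≤ q k := by simp [hq]
          exact_mod_cast this
  have hqub : ∀ k : ℕ, ((q k : ℕ) : ℝ) ≤ ((M : ℝ) + 2) * (((k : ℝ) + 1) ^ t⁻¹) := by
    intro k
    have h1 : (⌈((k : ℝ) + 1) ^ t⁻¹⌉₊ : ℝ) < ((k : ℝ) + 1) ^ t⁻¹ + 1 :=
      Nat.ceil_lt_add_one (le_trans zero_le_one (ha1 k))
    have h2 := ha1 k
    have h3 : ((q k : ℕ) : ℝ) = (M : ℝ) + (⌈((k : ℝ) + 1) ^ t⁻¹⌉₊ : ℝ) := by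
      simp [hq]
    rw [h3]
    nlinarith [Nat.cast_nonneg (α := ℝ) M]
  have hqpos : ∀ k : ℕ, (0:ℝ) < ((q k : ℕ) : ℝ) :=
    fun k => lt_of_lt_of_le (hapos k) (haq k)
  have hexp : ∀ {s : ℝ} (hk1 : (0:ℝ) ≤ s) (k : ℕ),
      ((((k : ℝ) + 1)) ^ t⁻¹) ^ (-s) = ((k : ℝ) + 1) ^ (t⁻¹ * (-s)) := by
    intro s _ k
    rw [← Real.rpow_mul (by positivity)]
  apply sInf_ofReal_eq
  · rintro s ⟨hs0, hsum⟩
    by_contra hts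
    push_neg at hts
    set C : ℝ := ((M : ℝ) + 2) ^ s with hC
    have hCpos : (0:ℝ) < C := Real.rpow_pos_of_pos (by positivity) s
    have hsum2 : Summable (fun k : ℕ => C * ((q k : ℕ) : ℝ) ^ (-s)) := hsum.mul_left C
    refine not_summable_of_eventually_ge_s8 (fun k => by positivity)
      (Eventually.of_forall fun k => ?_) hsum2
    have hk1 : (0:ℝ) < (k : ℝ) + 1 := by positivity
    have step1 : (((M : ℝ) + 2) * (((k : ℝ) + 1) ^ t⁻¹)) ^ (-s) ≤ ((q k : ℕ) : ℝ) ^ (-s) :=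
      Real.rpow_le_rpow_of_nonpos (hqpos k) (hqub k) (by linarith)
    have step2 : (((M : ℝ) + 2) * (((k : ℝ) + 1) ^ t⁻¹)) ^ (-s)
        = C⁻¹ * (((k : ℝ) + 1) ^ (t⁻¹ * (-s))) := by
      rw [Real.mul_rpow (by positivity) (Real.rpow_nonneg hk1.le _),
        Real.rpow_neg (by positivity : (0:ℝ) ≤ (M : ℝ) + 2), ← hC, hexp hs0]
    have hexple : (-1 : ℝ) ≤ t⁻¹ * (-s) := by
      have h1 : t⁻¹ * s ≤ t⁻¹ * t := mul_le_mul_of_nonneg_left hts.le (inv_nonneg.2 ht.le)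
      rw [inv_mul_cancel₀ ht.ne'] at h1
      nlinarith
    calc ((k : ℝ) + 1)⁻¹ = ((k : ℝ) + 1) ^ (-1 : ℝ) := (Real.rpow_neg_one _).symm
      _ ≤ ((k : ℝ) + 1) ^ (t⁻¹ * (-s)) :=
          Real.rpow_le_rpow_of_exponent_le (by linarith [Nat.cast_nonneg (α := ℝ) k]) hexple
      _ = C * (C⁻¹ * (((k : ℝ) + 1) ^ (t⁻¹ * (-s)))) := by
          field_simp
      _ ≤ C * (((q k : ℕ) : ℝ) ^ (-s)) := by
          apply mul_le_mul_of_nonneg_left _ hCpos.le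
          rw [← step2]
          exact step1
  · intro ε hε
    refine ⟨by linarith, ?_⟩
    set s : ℝ := t + ε with hs
    have hs0 : (0:ℝ) ≤ s := by linarith
    have hp : t⁻¹ * (-s) < -1 := by
      have h1 : t⁻¹ * t < t⁻¹ * s := by
        apply mul_lt_mul_of_pos_left _ (inv_pos.2 ht)
        linarith
      rw [inv_mul_cancel₀ ht.ne'] at h1
      nlinarith
    have hsummand : Summable (fun k : ℕ => ((k : ℝ) + 1) ^ (t⁻¹ * (-s))) := by
      have h1 : Summable (fun n : ℕ => ((n : ℝ)) ^ (t⁻¹ * (-s))) :=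
        Real.summable_nat_rpow.2 hp
      have h2 := (summable_nat_add_iff 1).2 h1
      exact h2.congr (fun k => by push_cast; ring_nf)
    apply Summable.of_nonneg_of_le (fun k => Real.rpow_nonneg (hqpos k).le _) _ hsummand
    intro k
    calc ((q k : ℕ) : ℝ) ^ (-s) ≤ ((((k : ℝ) + 1)) ^ t⁻¹) ^ (-s) :=
          Real.rpow_le_rpow_of_nonpos (hapos k) (haq k) (by linarith)
      _ = ((k : ℝ) + 1) ^ (t⁻¹ * (-s)) := hexp hs0 k

/-- `α = 0` tail -/
lemma sInf_Eset_two_pow {M : ℕ} (hM : 2 ≤ M) :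
    sInf (ENNReal.ofReal '' Eset (fun k => M + 2 ^ k)) = ENNReal.ofReal 0 := by
  apply sInf_ofReal_eq
  · exact fun s hs => hs.1
  · intro ε hε
    refine ⟨by linarith, ?_⟩
    have hqpos : ∀ k : ℕ, (0:ℝ) < (((M + 2 ^ k : ℕ)) : ℝ) := by
      intro k
      have : 0 < M + 2 ^ k := by positivity
      exact_mod_cast this
    have hbase : (0:ℝ) ≤ (2:ℝ) ^ (-ε) := Real.rpow_nonneg (by norm_num) _
    have hlt1 : (2:ℝ) ^ (-ε) < 1 :=
      Real.rpow_lt_one_of_one_lt_of_neg one_lt_two (by linarith)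
    apply Summable.of_nonneg_of_le (fun k => Real.rpow_nonneg (hqpos k).le _) _
      (summable_geometric_of_lt_one hbase hlt1)
    intro k
    have h2k : (0:ℝ) < (2:ℝ) ^ k := by positivity
    have hle : (2:ℝ) ^ k ≤ ((M + 2 ^ k : ℕ) : ℝ) := by
      push_cast
      linarith [Nat.cast_nonneg (α := ℝ) M]
    calc ((M + 2 ^ k : ℕ) : ℝ) ^ (-(0 + ε)) ≤ ((2:ℝ) ^ k) ^ (-(0 + ε)) :=
          Real.rpow_le_rpow_of_nonpos h2k hle (by linarith)
      _ = ((2:ℝ) ^ (-ε)) ^ k := by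
          rw [← Real.rpow_natCast (2:ℝ) k, ← Real.rpow_mul (by norm_num),
            ← Real.rpow_natCast ((2:ℝ) ^ (-ε)) k, ← Real.rpow_mul (by norm_num)]
          ring_nf

end Tails

lemma hub_of_exists {d : ℕ → ℕ} (hm : Monotone d) (hu : ∀ N, ∃ i, N < d i) :
    ∀ n, ∃ m, d n < d (n + m) := by
  intro n
  obtain ⟨i, hi⟩ := hu (d n)
  have hni : n < i := by
    by_contra h
    push_neg at h
    have := hm h
    omega
  exact ⟨i - n, by rwa [Nat.add_sub_cancel' hni.le]⟩

lemma Eset_congr_shift (d : ℕ → ℕ) (n : ℕ) :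
    Eset d = Eset (fun k => d (n + k)) := by
  ext s
  simp only [Eset, Set.mem_setOf_eq, and_congr_right_iff]
  intro hs
  constructor
  · intro h
    exact ((summable_nat_add_iff n).2 h).congr (fun k => by rw [Nat.add_comm k n])
  · intro h
    exact (summable_nat_add_iff n).1 (h.congr (fun k => by rw [Nat.add_comm k n]))

lemma main_aux (α : ℝ≥0∞) {y' : ℝ} (hy' : y' ∈ Set.Ioo (0:ℝ) 1) (hirr : Irrational y')
    (n : ℕ) (g : ℕ → ℕ) (hg : Monotone g) (hgu : ∀ N : ℕ, ∃ k, N < g k)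
    (hL : ∀ M : ℕ, 2 ≤ M → sInf (ENNReal.ofReal '' Eset (fun k => M + g k)) = α) :
    ∃ x : ℝ, x ∈ Set.Ioo (0:ℝ) 1 ∧ engelLambda x = α ∧ |x - y'| < (1/2 : ℝ) ^ n := by
  set c : ℕ → ℕ := fun k => engelDigit (k + 1) y' with hc
  have hcmono : Monotone c := digit_mono hy' hirr
  have hc2 : ∀ k, 2 ≤ c k := fun k => digit_two_le hy' hirr k
  set M : ℕ := 2 + c n with hMdef
  have hM2 : 2 ≤ M := by omega
  set d : ℕ → ℕ := fun k => if k < n then c k else M + g (k - n) with hd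
  have hdc : ∀ k, k < n → d k = c k := fun k hk => if_pos hk
  have hdt : ∀ k, d (n + k) = M + g k := fun k => by
    simp only [hd]
    rw [if_neg (by omega), show n + k - n = k by omega]
  have hmono : Monotone d := by
    intro a b hab
    simp only [hd]
    by_cases hA : a < n
    · by_cases hB : b < n
      · rw [if_pos hA, if_pos hB]; exact hcmono hab
      · rw [if_pos hA, if_neg hB]
        have h1 : c a ≤ c n := hcmono (by omega)
        omega
    · have hB : ¬ b < n := by omega
      rw [if_neg hA, if_neg hB]
      have := hg (show a - n ≤ b - n by omega)
      omega
  have h2 : 2 ≤ d 0 := by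
    simp only [hd]
    split
    · exact hc2 0
    · omega
  have hub : ∀ m, ∃ j, d m < d (m + j) := by
    apply hub_of_exists hmono
    intro N
    obtain ⟨k, hk⟩ := hgu N
    exact ⟨n + k, by have := hdt k; omega⟩
  refine ⟨xval d 0, ⟨xval_pos hmono h2 0, xval_lt_one hmono h2 hub 0⟩, ?_, ?_⟩
  · rw [lambda_xval hmono h2 hub]
    have he1 : {s : ℝ | 0 ≤ s ∧ Summable fun k : ℕ => ((d k : ℝ)) ^ (-s)} = Eset d := rfl
    rw [he1, Eset_congr_shift d n]
    have he2 : (fun k => d (n + k)) = fun k => M + g k := funext hdt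
    rw [he2]
    exact hL M hM2
  · have hxexp := rec_expand c (xval d) n (fun k hk => by
      rw [← hdc k hk]
      exact xval_rec hmono h2 k)
    have hyexp := rec_expand c (fun m => engelT^[m] y') n (fun k hk => digit_rec hy' hirr k)
    simp only [Function.iterate_zero_apply] at hyexp
    set P : ℝ := ∏ j ∈ Finset.range n, ((c j : ℝ))⁻¹ with hP
    have hPpos : 0 < P := Finset.prod_pos (fun j _ => inv_pos.2 (by
      have := hc2 j; positivity))
    have hPle : P ≤ (1/2 : ℝ) ^ n := by
      rw [hP]
      calc ∏ j ∈ Finset.range n, ((c j : ℝ))⁻¹ ≤ ∏ _j ∈ Finset.range n, (1/2 : ℝ) := by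
            apply Finset.prod_le_prod
            · intro j _; positivity
            · intro j _
              rw [one_div]
              apply inv_anti₀ (by norm_num)
              exact_mod_cast hc2 j
        _ = (1/2 : ℝ) ^ n := by simp
    have hdiff : xval d 0 - y' = P * (xval d n - engelT^[n] y') := by
      linear_combination hxexp - hyexp
    have hxn1 : 0 < xval d n := xval_pos hmono h2 n
    have hxn2 : xval d n < 1 := xval_lt_one hmono h2 hub n
    have hyn := (iterate_forward hy' hirr n).1
    have habs : |xval d n - engelT^[n] y'| < 1 := by
      rw [abs_lt]
      obtain ⟨ha, hb⟩ := hyn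
      constructor <;> [linarith; linarith]
    calc |xval d 0 - y'| = P * |xval d n - engelT^[n] y'| := by
          rw [hdiff, abs_mul, abs_of_pos hPpos]
      _ < P * 1 := mul_lt_mul_of_pos_left habs hPpos
      _ = P := mul_one P
      _ ≤ (1/2 : ℝ) ^ n := hPle

end EngelAux

/-- For every `α ∈ [0,∞]`, the level set `{x ∈ (0,1) : λ(x) = α}` is dense
in `(0,1)`. -/
theorem engelLambda_level_set_dense (α : ℝ≥0∞) :
    ∀ y ∈ Set.Ioo (0 : ℝ) 1,
      y ∈ closure {x : ℝ | x ∈ Set.Ioo (0 : ℝ) 1 ∧ engelLambda x = α} := by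
  intro y hy
  rw [Metric.mem_closure_iff]
  intro ε hε
  obtain ⟨hy0, hy1⟩ := hy
  have hlt : max 0 (y - ε/2) < y := max_lt hy0 (by linarith)
  obtain ⟨y', hirr, hy'l, hy'u⟩ := exists_irrational_btwn hlt
  have hy'0 : 0 < y' := lt_of_le_of_lt (le_max_left _ _) hy'l
  have hy'1 : y' < 1 := hy'u.trans hy1
  have hyy' : |y - y'| < ε/2 := by
    have h1 : y - ε/2 < y' := lt_of_le_of_lt (le_max_right _ _) hy'l
    rw [abs_lt]
    constructor <;> [linarith; linarith]
  obtain ⟨n, hn⟩ := exists_pow_lt_of_lt_one (show (0:ℝ) < ε/2 by linarith)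
    (show (1/2:ℝ) < 1 by norm_num)
  have hmem : y' ∈ Set.Ioo (0:ℝ) 1 := ⟨hy'0, hy'1⟩
  have key : ∃ x : ℝ, x ∈ Set.Ioo (0:ℝ) 1 ∧ engelLambda x = α ∧ |x - y'| < (1/2:ℝ)^n := by
    rcases ENNReal.trichotomy α with h0 | htop | hfin
    · -- α = 0 : doubly fast tail
      apply EngelAux.main_aux α hmem hirr n (fun k => 2 ^ k)
      · intro a b hab
        exact Nat.pow_le_pow_right (by norm_num) hab
      · intro N
        exact ⟨N, Nat.lt_two_pow_self⟩
      · intro M hM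
        rw [h0, EngelAux.Tails.sInf_Eset_two_pow hM, ENNReal.ofReal_zero]
    · -- α = ⊤ : logarithmic tail
      apply EngelAux.main_aux α hmem hirr n (fun k => Nat.log 2 (k + 1))
      · intro a b hab
        exact Nat.log_mono_right (by omega)
      · intro N
        refine ⟨2 ^ (N + 1) - 1, ?_⟩
        have hpow : 1 ≤ 2 ^ (N + 1) := Nat.one_le_two_pow
        have : 2 ^ (N + 1) - 1 + 1 = 2 ^ (N + 1) := by omega
        rw [this, Nat.log_pow (by norm_num)]
        omega
      · intro M hM
        rw [htop, EngelAux.Eset_log hM, Set.image_empty, sInf_empty]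
    · -- α finite positive
      have hne : α ≠ ⊤ := by
        intro h
        rw [h] at hfin
        simp at hfin
      set t : ℝ := α.toReal with ht
      apply EngelAux.main_aux α hmem hirr n (fun k => ⌈((k : ℝ) + 1) ^ t⁻¹⌉₊)
      · intro a b hab
        apply Nat.ceil_mono
        apply Real.rpow_le_rpow (by positivity) _ (inv_nonneg.2 hfin.le)
        have : (a:ℝ) ≤ (b:ℝ) := by exact_mod_cast hab
        linarith
      · intro N
        have htend : Tendsto (fun k : ℕ => ((k : ℝ) + 1) ^ t⁻¹) atTop atTop :=
          (tendsto_rpow_atTop (inv_pos.2 hfin)).comp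
            (tendsto_atTop_add_const_right atTop 1 tendsto_natCast_atTop_atTop)
        obtain ⟨k, hk⟩ := (htend.eventually_gt_atTop (N : ℝ)).exists
        refine ⟨k, ?_⟩
        have h1 : (N : ℝ) < (⌈((k : ℝ) + 1) ^ t⁻¹⌉₊ : ℝ) := lt_of_lt_of_le hk (Nat.le_ceil _)
        exact_mod_cast h1
      · intro M hM
        rw [EngelAux.Tails.sInf_Eset_rpow hM hfin]
        exact ENNReal.ofReal_toReal hne
  obtain ⟨x, hx1, hx2, hx3⟩ := key
  refine ⟨x, ⟨hx1, hx2⟩, ?_⟩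
  have htri : |y - x| ≤ |y - y'| + |y' - x| := abs_sub_le y y' x
  have hcomm : |y' - x| = |x - y'| := abs_sub_comm y' x
  rw [Real.dist_eq]
  linarith
end

section
/- The function λ : (0,1) → [0,∞] sending x to the exponent of convergence of its Engel digit sequence is discontinuous at every point of (0,1). -/
open Filter MeasureTheory Set Topology
open scoped ENNReal NNReal

noncomputable def ztTerm (c : ℕ) (n : ℕ) : ℝ := ∏ i ∈ Finset.range (n+1), ((c + i : ℕ) : ℝ)⁻¹

noncomputable def zt (c : ℕ) : ℝ := ∑' n : ℕ, ztTerm c n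

lemma ztTerm_pos (c : ℕ) (hc : 2 ≤ c) (n : ℕ) : 0 < ztTerm c n := by
  apply Finset.prod_pos
  intro i _
  have : 0 < c + i := by omega
  positivity

lemma ztTerm_le (c : ℕ) (hc : 2 ≤ c) (n : ℕ) : ztTerm c n ≤ ((c:ℝ)⁻¹) ^ (n+1) := by
  unfold ztTerm
  have h : ((c:ℝ)⁻¹) ^ (n+1) = ∏ _i ∈ Finset.range (n+1), (c:ℝ)⁻¹ := by
    rw [Finset.prod_const, Finset.card_range]
  rw [h]
  apply Finset.prod_le_prod
  · intro i _
    have : 0 < c + i := by omega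
    positivity
  · intro i _
    apply inv_anti₀
    · have : (0:ℝ) < c := by exact_mod_cast by omega
      linarith
    · exact_mod_cast Nat.le_add_right c i

lemma zt_summable (c : ℕ) (hc : 2 ≤ c) : Summable (ztTerm c) := by
  apply Summable.of_nonneg_of_le (fun n => (ztTerm_pos c hc n).le) (ztTerm_le c hc)
  have h1 : ((c:ℝ)⁻¹) < 1 := by
    rw [inv_lt_one_iff₀]
    right; exact_mod_cast by omega
  have h0 : (0:ℝ) ≤ (c:ℝ)⁻¹ := by positivity
  exact ((summable_geometric_of_lt_one h0 h1).mul_left ((c:ℝ)⁻¹)).congr (fun n => by ring)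

lemma geom_tsum (c : ℕ) (hc : 2 ≤ c) : ∑' n : ℕ, ((c:ℝ)⁻¹) ^ (n+1) = ((c:ℝ) - 1)⁻¹ := by
  have hc1 : (1:ℝ) < c := by exact_mod_cast by omega
  have h1 : ((c:ℝ)⁻¹) < 1 := by rw [inv_lt_one_iff₀]; right; exact hc1
  have h0 : (0:ℝ) ≤ (c:ℝ)⁻¹ := by positivity
  have := tsum_geometric_of_lt_one h0 h1
  calc ∑' n : ℕ, ((c:ℝ)⁻¹) ^ (n+1) = ∑' n : ℕ, (c:ℝ)⁻¹ * ((c:ℝ)⁻¹) ^ n := by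
        apply tsum_congr; intro n; ring
    _ = (c:ℝ)⁻¹ * (1 - (c:ℝ)⁻¹)⁻¹ := by rw [tsum_mul_left, this]
    _ = ((c:ℝ) - 1)⁻¹ := by
        have : (c:ℝ) ≠ 0 := by positivity
        field_simp

lemma zt_pos (c : ℕ) (hc : 2 ≤ c) : 0 < zt c :=
  lt_of_lt_of_le (ztTerm_pos c hc 0) (Summable.le_tsum (zt_summable c hc) 0
    (fun n _ => (ztTerm_pos c hc n).le))

lemma zt_gt (c : ℕ) (hc : 2 ≤ c) : (c:ℝ)⁻¹ < zt c := by
  have h2 : ∑ n ∈ Finset.range 2, ztTerm c n ≤ zt c :=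
    Summable.sum_le_tsum _ (fun n _ => (ztTerm_pos c hc n).le) (zt_summable c hc)
  have h0 : ztTerm c 0 = (c:ℝ)⁻¹ := by
    unfold ztTerm
    simp
  have h1 : 0 < ztTerm c 1 := ztTerm_pos c hc 1
  rw [Finset.sum_range_succ, Finset.sum_range_one, h0] at h2
  linarith

lemma zt_lt (c : ℕ) (hc : 2 ≤ c) : zt c < ((c:ℝ) - 1)⁻¹ := by
  have hstrict : ztTerm c 1 < ((c:ℝ)⁻¹) ^ (1+1) := by
    unfold ztTerm
    rw [Finset.prod_range_succ, Finset.prod_range_one]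
    have hc0 : (0:ℝ) < c := by exact_mod_cast by omega
    have : ((c:ℝ))⁻¹ * ((c:ℝ)+1)⁻¹ < (c:ℝ)⁻¹ * (c:ℝ)⁻¹ := by
      apply mul_lt_mul_of_pos_left _ (by positivity)
      apply inv_strictAnti₀ hc0
      linarith
    simpa [pow_succ, add_comm] using this
  have hgs : Summable (fun n : ℕ => ((c:ℝ)⁻¹) ^ (n+1)) := by
    have h1 : ((c:ℝ)⁻¹) < 1 := by rw [inv_lt_one_iff₀]; right; exact_mod_cast by omega
    have h0 : (0:ℝ) ≤ (c:ℝ)⁻¹ := by positivity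
    exact ((summable_geometric_of_lt_one h0 h1).mul_left ((c:ℝ)⁻¹)).congr (fun n => by ring)
  calc zt c < ∑' n : ℕ, ((c:ℝ)⁻¹) ^ (n+1) :=
        Summable.tsum_lt_tsum (ztTerm_le c hc) hstrict (zt_summable c hc) hgs
    _ = ((c:ℝ) - 1)⁻¹ := geom_tsum c hc

lemma zt_lt_one (c : ℕ) (hc : 2 ≤ c) : zt c < 1 := by
  have := zt_lt c hc
  have h1 : (1:ℝ) ≤ (c:ℝ) - 1 := by
    have : (2:ℝ) ≤ c := by exact_mod_cast hc
    linarith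
  calc zt c < ((c:ℝ)-1)⁻¹ := this
    _ ≤ 1 := by
      rw [inv_le_one_iff₀]; right; exact h1

lemma zt_inv_bounds (c : ℕ) (hc : 2 ≤ c) :
    (c:ℝ) - 1 < (zt c)⁻¹ ∧ (zt c)⁻¹ < (c:ℝ) := by
  have hpos := zt_pos c hc
  have hgt := zt_gt c hc
  have hlt := zt_lt c hc
  have hc0 : (0:ℝ) < c := by exact_mod_cast by omega
  have hc1 : (0:ℝ) < (c:ℝ) - 1 := by
    have : (2:ℝ) ≤ c := by exact_mod_cast hc
    linarith
  constructor
  · have := inv_strictAnti₀ hpos hlt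
    rwa [inv_inv] at this
  · have := inv_strictAnti₀ (by positivity : (0:ℝ) < (c:ℝ)⁻¹) hgt
    rwa [inv_inv] at this

lemma engelT_zt (c : ℕ) (hc : 2 ≤ c) : engelT (zt c) = zt (c+1) := by
  have hpos := zt_pos c hc
  obtain ⟨hl, hr⟩ := zt_inv_bounds c hc
  have hceil : ⌈(zt c)⁻¹⌉ = (c:ℤ) := by
    rw [Int.ceil_eq_iff]
    constructor
    · push_cast; exact hl
    · push_cast; exact hr.le
  have hg : ∀ n : ℕ, ztTerm c n = (∏ i ∈ Finset.range n, ((c+1+i : ℕ):ℝ)⁻¹) * (c:ℝ)⁻¹ := by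
    intro n
    unfold ztTerm
    rw [Finset.prod_range_succ']
    congr 1
    apply Finset.prod_congr rfl
    intro i _
    push_cast
    ring_nf
  have hc0 : (c:ℝ) ≠ 0 := by positivity
  set g : ℕ → ℝ := fun n => ∏ i ∈ Finset.range n, ((c+1+i : ℕ):ℝ)⁻¹ with hgdef
  have hsg : Summable g := by
    have : Summable (fun n => (c:ℝ) * ztTerm c n) := (zt_summable c hc).mul_left _
    apply this.congr
    intro n
    rw [hg n, mul_comm, mul_assoc, inv_mul_cancel₀ hc0, mul_one]
  have hkey : zt c * (c:ℝ) = 1 + zt (c+1) := by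
    have h1 : zt c * (c:ℝ) = ∑' n, g n := by
      unfold zt
      rw [← tsum_mul_right]
      apply tsum_congr
      intro n
      rw [hg n, mul_assoc, inv_mul_cancel₀ hc0, mul_one]
    have h2 : ∑' n, g n = g 0 + ∑' m, g (m+1) := Summable.tsum_eq_zero_add hsg
    have h3 : g 0 = 1 := by simp [hgdef]
    have h4 : (∑' m, g (m+1)) = zt (c+1) := by
      apply tsum_congr
      intro m
      rfl
    rw [h1, h2, h3, h4]
  unfold engelT
  rw [if_neg hpos.ne', hceil]
  push_cast
  linarith

lemma engelT_iter_zt (c : ℕ) (hc : 2 ≤ c) (n : ℕ) : engelT^[n] (zt c) = zt (c + n) := by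
  induction n generalizing c with
  | zero => simp
  | succ m ih =>
    rw [Function.iterate_succ_apply, engelT_zt c hc, ih (c+1) (by omega)]
    congr 1
    omega

lemma engelDigit_zt (c : ℕ) (hc : 2 ≤ c) (n : ℕ) :
    engelDigit (n+1) (zt c) = c + n := by
  unfold engelDigit
  simp only [Nat.add_sub_cancel]
  rw [engelT_iter_zt c hc n]
  obtain ⟨hl, hr⟩ := zt_inv_bounds (c+n) (by omega)
  rw [Nat.ceil_eq_iff (by omega : c + n ≠ 0)]
  constructor
  · have : ((c + n - 1 : ℕ) : ℝ) = ((c+n : ℕ) : ℝ) - 1 := by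
      push_cast [Nat.cast_sub (by omega : 1 ≤ c + n)]
      ring
    rw [this]
    exact_mod_cast hl
  · exact_mod_cast hr.le

lemma not_summable_inv_add (c : ℕ) : ¬ Summable (fun n : ℕ => (((c:ℝ) + n))⁻¹) := by
  intro h
  have h2 : Summable (fun n : ℕ => ((n + c : ℕ) : ℝ)⁻¹) := by
    apply h.congr
    intro n
    push_cast
    ring_nf
  exact Real.not_summable_natCast_inv ((summable_nat_add_iff c).mp h2)

lemma one_le_engelLambda_zt (c : ℕ) (hc : 2 ≤ c) : 1 ≤ engelLambda (zt c) := by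
  unfold engelLambda
  apply le_sInf
  rintro b ⟨s, ⟨hs0, hsum⟩, rfl⟩
  rw [← ENNReal.ofReal_one]
  apply ENNReal.ofReal_le_ofReal
  by_contra hs1
  push_neg at hs1
  apply not_summable_inv_add c
  apply Summable.of_nonneg_of_le (fun n => by positivity) _ hsum
  intro n
  have hb1 : (1:ℝ) ≤ (c:ℝ) + n := by
    have : (2:ℝ) ≤ c := by exact_mod_cast hc
    have : (0:ℝ) ≤ n := by positivity
    linarith
  have hd : ((engelDigit (n + 1) (zt c) : ℕ) : ℝ) = (c:ℝ) + n := by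
    rw [engelDigit_zt c hc n]
    push_cast
    ring
  rw [hd]
  calc ((c:ℝ) + n)⁻¹ = ((c:ℝ) + n) ^ (-1 : ℝ) := (Real.rpow_neg_one _).symm
    _ ≤ ((c:ℝ) + n) ^ (-s) := Real.rpow_le_rpow_of_exponent_le hb1 (by linarith)

lemma glue_engelT (e : ℕ) (he : 2 ≤ e) (w : ℝ) (hw0 : 0 < w) (hw1 : w < ((e:ℝ) - 1)⁻¹) :
    engelT ((1 + w)/e) = w := by
  have he1 : (1:ℝ) ≤ (e:ℝ) - 1 := by
    have : (2:ℝ) ≤ e := by exact_mod_cast he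
    linarith
  have he0 : (0:ℝ) < e := by linarith
  set y := (1 + w)/e with hy
  have hy0 : 0 < y := by positivity
  have hylb : (e:ℝ)⁻¹ < y := by
    rw [hy, div_eq_mul_inv]
    nlinarith [inv_pos.mpr he0]
  have hyub : y < ((e:ℝ) - 1)⁻¹ := by
    rw [hy, div_lt_iff₀ he0]
    have he10 : (e:ℝ) - 1 ≠ 0 := by linarith
    have h1 : ((e:ℝ) - 1)⁻¹ * e = 1 + ((e:ℝ)-1)⁻¹ := by
      field_simp
      ring
    rw [h1]
    linarith
  have hceil : ⌈y⁻¹⌉ = (e:ℤ) := by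
    rw [Int.ceil_eq_iff]
    constructor
    · push_cast
      have := inv_strictAnti₀ hy0 hyub
      rwa [inv_inv] at this
    · push_cast
      have := inv_strictAnti₀ (by positivity : (0:ℝ) < (e:ℝ)⁻¹) hylb
      rw [inv_inv] at this
      exact this.le
  unfold engelT
  rw [if_neg hy0.ne', hceil]
  push_cast
  rw [hy]
  field_simp
  ring

lemma glue_lambda (e : ℕ) (he : 2 ≤ e) (w : ℝ) (hw0 : 0 < w) (hw1 : w < ((e:ℝ) - 1)⁻¹) :
    engelLambda w ≤ engelLambda ((1 + w)/e) := by
  set y := (1 + w)/e with hy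
  have hT : engelT y = w := glue_engelT e he w hw0 hw1
  have hdig : ∀ n : ℕ, engelDigit (n + 1 + 1) y = engelDigit (n + 1) w := by
    intro n
    unfold engelDigit
    simp only [Nat.add_sub_cancel]
    rw [Function.iterate_succ_apply, hT]
  unfold engelLambda
  apply sInf_le_sInf
  apply Set.image_mono
  rintro s ⟨hs0, hsum⟩
  refine ⟨hs0, ?_⟩
  have h2 : Summable (fun n : ℕ => ((engelDigit (n + 1 + 1) y : ℝ)) ^ (-s)) :=
    (summable_nat_add_iff 1).mpr hsum
  apply h2.congr
  intro n
  rw [hdig n]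

lemma glue_lt (e : ℕ) (he : 2 ≤ e) (w : ℝ) (hw1 : w < ((e:ℝ) - 1)⁻¹) :
    (1 + w)/e < ((e:ℝ) - 1)⁻¹ := by
  have he1 : (1:ℝ) ≤ (e:ℝ) - 1 := by
    have : (2:ℝ) ≤ e := by exact_mod_cast he
    linarith
  have he0 : (0:ℝ) < e := by linarith
  rw [div_lt_iff₀ he0]
  have he10 : (e:ℝ) - 1 ≠ 0 := by linarith
  have h1 : ((e:ℝ) - 1)⁻¹ * e = 1 + ((e:ℝ)-1)⁻¹ := by field_simp; ring
  rw [h1]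
  linarith

lemma ceil_facts (x : ℝ) (hx0 : 0 < x) (hx1 : x < 1) :
    2 ≤ ⌈x⁻¹⌉₊ ∧ ((⌈x⁻¹⌉₊:ℝ))⁻¹ ≤ x ∧ x < ((⌈x⁻¹⌉₊:ℝ) - 1)⁻¹ := by
  have hix : (1:ℝ) < x⁻¹ := (one_lt_inv₀ hx0).mpr hx1
  have he2 : 2 ≤ ⌈x⁻¹⌉₊ := by
    have : (1:ℕ) < ⌈x⁻¹⌉₊ := by
      rw [Nat.lt_ceil]
      exact_mod_cast hix
    omega
  have hle : x⁻¹ ≤ (⌈x⁻¹⌉₊ : ℝ) := Nat.le_ceil _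
  have hgt : (⌈x⁻¹⌉₊ : ℝ) - 1 < x⁻¹ := by
    have := Nat.ceil_lt_add_one (le_of_lt (by positivity : (0:ℝ) < x⁻¹))
    linarith
  have he1 : (1:ℝ) ≤ (⌈x⁻¹⌉₊:ℝ) - 1 := by
    have : (2:ℝ) ≤ (⌈x⁻¹⌉₊:ℝ) := by exact_mod_cast he2
    linarith
  refine ⟨he2, ?_, ?_⟩
  · have h := inv_anti₀ (by positivity : (0:ℝ) < x⁻¹) hle
    rwa [inv_inv] at h
  · have h := inv_strictAnti₀ (by linarith : (0:ℝ) < (⌈x⁻¹⌉₊:ℝ) - 1) hgt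
    rwa [inv_inv] at h

lemma engel_approx (k : ℕ) : ∀ x : ℝ, 0 < x → x < 1 →
    ∃ y : ℝ, 0 < y ∧ y < ((⌈x⁻¹⌉₊ : ℝ) - 1)⁻¹ ∧ |y - x| ≤ (1/2 : ℝ)^k ∧
      1 ≤ engelLambda y := by
  induction k with
  | zero =>
    intro x hx0 hx1
    obtain ⟨he2, hxl, hxu⟩ := ceil_facts x hx0 hx1
    refine ⟨zt ⌈x⁻¹⌉₊, zt_pos _ he2, zt_lt _ he2, ?_, one_le_engelLambda_zt _ he2⟩
    have h1 := zt_pos _ he2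
    have h2 := zt_lt_one _ he2
    rw [abs_le]
    constructor <;> [skip; skip] <;> simp only [pow_zero] <;> linarith
  | succ k ih =>
    intro x hx0 hx1
    obtain ⟨he2, hxl, hxu⟩ := ceil_facts x hx0 hx1
    set e := ⌈x⁻¹⌉₊ with hedef
    have he0 : (0:ℝ) < e := by
      have : (2:ℝ) ≤ (e:ℝ) := by exact_mod_cast he2
      linarith
    have he1R : (1:ℝ) ≤ (e:ℝ) - 1 := by
      have : (2:ℝ) ≤ (e:ℝ) := by exact_mod_cast he2
      linarith
    set w := x * e - 1 with hwdef
    have hw0 : 0 ≤ w := by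
      have : (1:ℝ) ≤ x * e := by
        rw [← inv_mul_cancel₀ (by positivity : (e:ℝ) ≠ 0)]
        exact mul_le_mul_of_nonneg_right hxl he0.le
      linarith
    have hwu : w < ((e:ℝ) - 1)⁻¹ := by
      have h1 : x * e < ((e:ℝ)-1)⁻¹ * e := by
        exact mul_lt_mul_of_pos_right hxu he0
      have he10 : (e:ℝ) - 1 ≠ 0 := by linarith
      have h2 : ((e:ℝ) - 1)⁻¹ * e = 1 + ((e:ℝ)-1)⁻¹ := by field_simp; ring
      rw [h2] at h1
      linarith
    by_cases hwz : w ≤ 0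
    · -- terminating case: x = 1/e
      have hweq : w = 0 := le_antisymm hwz hw0
      have hxe : x = (e:ℝ)⁻¹ := by
        have : x * e = 1 := by rw [hwdef] at hweq; linarith
        field_simp at this ⊢
        linarith
      set D := max e (2^(k+1) + 1) with hDdef
      have hDe : e ≤ D := le_max_left _ _
      have hD2 : 2 ≤ D := le_trans he2 hDe
      have hDk : 2^(k+1) + 1 ≤ D := le_max_right _ _
      have hz0 := zt_pos D hD2
      have hz1 : zt D < ((e:ℝ) - 1)⁻¹ := by
        calc zt D < ((D:ℝ) - 1)⁻¹ := zt_lt D hD2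
          _ ≤ ((e:ℝ) - 1)⁻¹ := by
            apply inv_anti₀ (by linarith)
            have : (e:ℝ) ≤ (D:ℝ) := by exact_mod_cast hDe
            linarith
      refine ⟨(1 + zt D)/e, by positivity, glue_lt e he2 _ hz1, ?_, ?_⟩
      · have hyx : (1 + zt D)/e - x = zt D / e := by
          rw [hxe]
          field_simp
          ring
        have hb : zt D / e ≤ zt D := by
          apply div_le_self hz0.le
          linarith
        have hc : zt D ≤ (1/2:ℝ)^(k+1) := by
          have h1 : zt D < ((D:ℝ) - 1)⁻¹ := zt_lt D hD2
          have h2 : ((2:ℝ))^(k+1) ≤ (D:ℝ) - 1 := by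
            have : ((2^(k+1) + 1 : ℕ):ℝ) ≤ (D:ℝ) := by exact_mod_cast hDk
            push_cast at this
            linarith
          have h3 : ((D:ℝ) - 1)⁻¹ ≤ ((2:ℝ)^(k+1))⁻¹ := by
            apply inv_anti₀ (by positivity) h2
          have h4 : ((2:ℝ)^(k+1))⁻¹ = (1/2:ℝ)^(k+1) := by
            rw [← inv_pow]
            norm_num
          linarith
        rw [hyx, abs_of_nonneg (by positivity)]
        linarith
      · exact le_trans (one_le_engelLambda_zt D hD2) (glue_lambda e he2 _ hz0 hz1)
    · push_neg at hwz
      have hwu1 : w < 1 := lt_of_lt_of_le hwu (by rw [inv_le_one_iff₀]; right; exact he1R)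
      obtain ⟨y', hy'0, hy'lt, hy'close, hy'lam⟩ := ih w hwz hwu1
      have hew : e ≤ ⌈w⁻¹⌉₊ := by
        have h1 : (e:ℝ) - 1 < w⁻¹ := by
          have := inv_strictAnti₀ hwz hwu
          rwa [inv_inv] at this
        have h2 : (e - 1 : ℕ) < ⌈w⁻¹⌉₊ := by
          rw [Nat.lt_ceil]
          have : ((e - 1 : ℕ) : ℝ) = (e:ℝ) - 1 := by
            push_cast [Nat.cast_sub (by omega : 1 ≤ e)]
            ring
          rw [this]
          exact h1
        omega
      have hy'e : y' < ((e:ℝ) - 1)⁻¹ := by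
        calc y' < ((⌈w⁻¹⌉₊:ℝ) - 1)⁻¹ := hy'lt
          _ ≤ ((e:ℝ) - 1)⁻¹ := by
            apply inv_anti₀ (by linarith)
            have : (e:ℝ) ≤ (⌈w⁻¹⌉₊:ℝ) := by exact_mod_cast hew
            linarith
      refine ⟨(1 + y')/e, by positivity, glue_lt e he2 _ hy'e, ?_, ?_⟩
      · have hxw : x = (1 + w)/e := by
          rw [hwdef]
          field_simp
          ring
        have hdiff : (1 + y')/e - x = (y' - w)/e := by
          rw [hxw]
          ring
        rw [hdiff, abs_div, abs_of_nonneg he0.le]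
        have h2e : (2:ℝ) ≤ e := by exact_mod_cast he2
        calc |y' - w| / (e:ℝ) ≤ |y' - w| / 2 := by
              exact div_le_div_of_nonneg_left (abs_nonneg _) (by norm_num) h2e
          _ ≤ (1/2:ℝ)^k / 2 := by linarith
          _ = (1/2:ℝ)^(k+1) := by ring
      · exact le_trans hy'lam (glue_lambda e he2 _ hy'0 hy'e)

lemma engelT_zero : engelT 0 = 0 := by unfold engelT; simp

lemma rat_terminates : ∀ p : ℕ, ∀ q : ℕ, 0 < q → p < q →
    ∃ k : ℕ, engelT^[k] ((p:ℝ)/q) = 0 := by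
  intro p
  induction p using Nat.strong_induction_on with
  | _ p ih =>
    intro q hq hpq
    rcases Nat.eq_zero_or_pos p with hp0 | hp0
    · exact ⟨0, by simp [hp0]⟩
    · have hq0 : (0:ℝ) < q := by exact_mod_cast hq
      have hp0R : (0:ℝ) < p := by exact_mod_cast hp0
      set x : ℝ := (p:ℝ)/q with hxdef
      have hx0 : 0 < x := by positivity
      have hxinv : x⁻¹ = (q:ℝ)/p := by
        rw [hxdef]
        field_simp
      set c : ℤ := ⌈(q:ℝ)/p⌉ with hcdef
      have hcl : (q:ℝ)/p ≤ (c:ℝ) := Int.le_ceil _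
      have hcu : (c:ℝ) < (q:ℝ)/p + 1 := Int.ceil_lt_add_one _
      have hTx : engelT x = ((p:ℤ) * c - q : ℤ) / (q:ℝ) := by
        unfold engelT
        rw [if_neg hx0.ne', hxinv, ← hcdef, hxdef]
        push_cast
        field_simp
      have hnum0 : 0 ≤ (p:ℤ) * c - q := by
        have h1 : (q:ℝ) ≤ (p:ℝ) * (c:ℝ) := by
          rw [div_le_iff₀ hp0R] at hcl
          linarith
        have h3 : (q:ℤ) ≤ (p:ℤ) * c := by exact_mod_cast h1
        omega
      have hnumlt : (p:ℤ) * c - q < p := by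
        have hqp : (q:ℝ)/p * p = q := div_mul_cancel₀ _ (ne_of_gt hp0R)
        have h1 : (p:ℝ) * (c:ℝ) < (q:ℝ) + p := by nlinarith [hcu, hp0R]
        have h3 : (p:ℤ) * c < (q:ℤ) + p := by exact_mod_cast h1
        omega
      set p' : ℕ := ((p:ℤ) * c - q).toNat with hp'def
      have hp'lt : p' < p := by omega
      have hp'q : p' < q := by omega
      have hTx' : engelT x = (p':ℝ)/q := by
        rw [hTx]
        congr 1
        rw [hp'def]
        exact_mod_cast (Int.toNat_of_nonneg hnum0).symm
      obtain ⟨k, hk⟩ := ih p' hp'lt q hq hp'q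
      exact ⟨k + 1, by rw [Function.iterate_succ_apply, hTx', hk]⟩

lemma terminating_lambda_zero (x : ℝ) (k : ℕ) (hk : engelT^[k] x = 0) :
    engelLambda x = 0 := by
  have hiter : ∀ n, k ≤ n → engelT^[n] x = 0 := by
    intro n hn
    obtain ⟨m, rfl⟩ := Nat.exists_eq_add_of_le hn
    rw [Nat.add_comm, Function.iterate_add_apply, hk]
    exact Function.iterate_fixed engelT_zero m
  have hdig : ∀ n, k ≤ n → engelDigit (n + 1) x = 0 := by
    intro n hn
    unfold engelDigit
    simp only [Nat.add_sub_cancel]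
    rw [hiter n hn]
    simp
  have hmem : ∀ s : ℝ, 0 < s →
      ENNReal.ofReal s ∈ (ENNReal.ofReal ''
        {s : ℝ | 0 ≤ s ∧ Summable fun n : ℕ => ((engelDigit (n + 1) x : ℝ)) ^ (-s)}) := by
    intro s hs
    refine ⟨s, ⟨hs.le, ?_⟩, rfl⟩
    apply summable_of_ne_finset_zero (s := Finset.range k)
    intro n hn
    rw [hdig n (by simpa [Finset.mem_range, not_lt] using hn)]
    rw [Nat.cast_zero, Real.zero_rpow (by simpa using hs.ne')]
  unfold engelLambda
  refine le_antisymm ?_ zero_le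
  apply ENNReal.le_of_forall_pos_le_add
  intro ε hε _
  rw [zero_add]
  calc sInf _ ≤ ENNReal.ofReal ((ε:ℝ)) := sInf_le (hmem _ (by exact_mod_cast hε))
    _ = (ε : ℝ≥0∞) := ENNReal.ofReal_coe_nnreal

/-- The function `λ : (0,1) → [0,∞]` is discontinuous at every point of
`(0,1)`. -/
theorem engelLambda_everywhere_discontinuous :
    ∀ x ∈ Set.Ioo (0 : ℝ) 1,
      ¬ ContinuousWithinAt engelLambda (Set.Ioo (0 : ℝ) 1) x := by
  rintro x ⟨hx0, hx1⟩ h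
  by_cases hx : engelLambda x = 0
  · have hU : Iio (1:ℝ≥0∞) ∈ 𝓝 (engelLambda x) := by
      rw [hx]
      exact Iio_mem_nhds zero_lt_one
    have hev : engelLambda ⁻¹' (Iio 1) ∈ 𝓝[Set.Ioo (0:ℝ) 1] x := h hU
    rw [Metric.mem_nhdsWithin_iff] at hev
    obtain ⟨ε, hε, hsub⟩ := hev
    obtain ⟨k, hk⟩ := exists_pow_lt_of_lt_one hε (by norm_num : (1/2:ℝ) < 1)
    obtain ⟨y, hy0, hylt, hyclose, hylam⟩ := engel_approx k x hx0 hx1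
    obtain ⟨he2, -, -⟩ := ceil_facts x hx0 hx1
    have hy1 : y < 1 := by
      have h1 : ((⌈x⁻¹⌉₊:ℝ) - 1)⁻¹ ≤ 1 := by
        rw [inv_le_one_iff₀]
        right
        have : (2:ℝ) ≤ (⌈x⁻¹⌉₊:ℝ) := by exact_mod_cast he2
        linarith
      linarith
    have hmem : y ∈ Metric.ball x ε ∩ Set.Ioo (0:ℝ) 1 := by
      refine ⟨?_, hy0, hy1⟩
      rw [Metric.mem_ball, Real.dist_eq]
      exact lt_of_le_of_lt hyclose hk
    have hcontra : engelLambda y ∈ Iio (1:ℝ≥0∞) := hsub hmem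
    exact absurd hcontra (not_lt.mpr hylam)
  · have hU : ({0}ᶜ : Set ℝ≥0∞) ∈ 𝓝 (engelLambda x) := compl_singleton_mem_nhds hx
    have hev : engelLambda ⁻¹' ({0}ᶜ) ∈ 𝓝[Set.Ioo (0:ℝ) 1] x := h hU
    rw [Metric.mem_nhdsWithin_iff] at hev
    obtain ⟨ε, hε, hsub⟩ := hev
    have hlt : x < min (x + ε) 1 := lt_min (by linarith) hx1
    obtain ⟨r, hr1, hr2⟩ := exists_rat_btwn hlt
    have hr0 : (0:ℝ) < r := lt_trans hx0 hr1
    have hrlt1 : (r:ℝ) < 1 := lt_of_lt_of_le hr2 (min_le_right _ _)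
    have hrball : (r:ℝ) ∈ Metric.ball x ε := by
      rw [Metric.mem_ball, Real.dist_eq, abs_of_pos (by linarith)]
      have := lt_of_lt_of_le hr2 (min_le_left _ _)
      linarith
    have hterm : ∃ k, engelT^[k] ((r:ℝ)) = 0 := by
      have hnum : 0 < r.num := Rat.num_pos.mpr (by exact_mod_cast hr0)
      have hcast : ((r.num.toNat : ℕ) : ℝ)/(r.den:ℝ) = (r:ℝ) := by
        rw [Rat.cast_def]
        congr 1
        exact_mod_cast Int.toNat_of_nonneg hnum.le
      have hpq : r.num.toNat < r.den := by
        have h1 : r < 1 := by exact_mod_cast hrlt1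
        have h2 : r.num < r.den := Rat.num_lt_denom_iff.mpr h1
        omega
      obtain ⟨k, hk⟩ := rat_terminates r.num.toNat r.den r.pos hpq
      exact ⟨k, by rwa [hcast] at hk⟩
    obtain ⟨k, hk⟩ := hterm
    have hlam := terminating_lambda_zero _ k hk
    have hmem2 : (r:ℝ) ∈ Metric.ball x ε ∩ Set.Ioo (0:ℝ) 1 := ⟨hrball, hr0, hrlt1⟩
    exact (hsub hmem2) hlam
end
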